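/- arXiv:math/0507357 — 7 statements merged into one kernel-verified Lean document; each statement's English description precedes it below -/
import Mathlib

section
/- Let G be a finite nonabelian p-group whose commutator subgroup G' has order p. If C_g and C_h are conjugacy classes of G each containing at least two elements, then the product of their class sums in 𝔽_p G is zero: Ĉ_g · Ĉ_h = 0. -/
open MonoidAlgebra

/-- The class sum of the conjugacy class of `g` in `𝔽_p G`. -/
noncomputable def classSum (p : ℕ) [Fact p.Prime] (G : Type*) [Group G] [Fintype G]
    [DecidableEq G] (g : G) : MonoidAlgebra (ZMod p) G :=
  ∑ h ∈ Finset.univ.filter (fun h => IsConj g h), MonoidAlgebra.of (ZMod p) G h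

/-- If `G` is a finite nonabelian `p`-group with `|G'| = p`, then the product of the
class sums of any two conjugacy classes having at least two elements is zero. -/
theorem classSum_mul_classSum_eq_zero (p : ℕ) [Fact p.Prime] (G : Type*) [Group G]
    [Fintype G] [DecidableEq G] (hG : IsPGroup p G)
    (hna : ¬ ∀ a b : G, a * b = b * a)
    (hG' : Nat.card (commutator G) = p) (g h : G)
    (hg : 2 ≤ (Finset.univ.filter (fun x => IsConj g x)).card)
    (hh : 2 ≤ (Finset.univ.filter (fun x => IsConj h x)).card) :
    classSum p G g * classSum p G h = 0 := by
  classical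
  have hp : p.Prime := Fact.out
  set K : Finset G := Finset.univ.filter (fun z => z ∈ commutator G) with hK
  have hmemK : ∀ z : G, z ∈ K ↔ z ∈ commutator G := by
    intro z; simp [hK]
  have hKcard : K.card = p := by
    rw [← hG', Nat.card_eq_fintype_card, Fintype.card_subtype]
  -- the conjugacy class of any element with class size ≥ 2 is g * K
  have claim : ∀ a : G, 2 ≤ (Finset.univ.filter (fun x => IsConj a x)).card →
      (Finset.univ.filter (fun x => IsConj a x)) = K.image (fun z => a * z) := by
    intro a ha
    have hsub : (Finset.univ.filter (fun x => IsConj a x)) ⊆ K.image (fun z => a * z) := by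
      intro x hx
      rw [Finset.mem_filter] at hx
      obtain ⟨c, hc⟩ := isConj_iff.mp hx.2
      refine Finset.mem_image.mpr ⟨a⁻¹ * x, ?_, by group⟩
      rw [hmemK]
      open scoped commutatorElement in
      have : a⁻¹ * x = ⁅a⁻¹, c⁆ := by rw [← hc]; group
      rw [this, commutator_def]
      exact Subgroup.commutator_mem_commutator (Subgroup.mem_top _) (Subgroup.mem_top _)
    have himgcard : (K.image (fun z => a * z)).card = p := by
      rw [Finset.card_image_of_injective _ (mul_right_injective a), hKcard]
    -- class size divides |G|, a power of p
    have horb : (Finset.univ.filter (fun x => IsConj a x)) =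
        (MulAction.orbit (ConjAct G) a).toFinset := by
      ext x
      simp only [Finset.mem_filter, Finset.mem_univ, true_and, Set.mem_toFinset,
        ConjAct.mem_orbit_conjAct]
      exact isConj_comm
    have hdvd : (Finset.univ.filter (fun x => IsConj a x)).card ∣ Fintype.card G := by
      rw [horb, Set.toFinset_card, ← ConjAct.card (G := G)]
      exact Dvd.intro _ (MulAction.card_orbit_mul_card_stabilizer_eq_card_group (ConjAct G) a)
    obtain ⟨n, hn⟩ := IsPGroup.iff_card.mp hG
    rw [Nat.card_eq_fintype_card] at hn
    rw [hn] at hdvd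
    obtain ⟨k, hk, hck⟩ := (Nat.dvd_prime_pow hp).mp hdvd
    have hk1 : 1 ≤ k := by
      by_contra hk0
      push_neg at hk0
      interval_cases k
      rw [pow_zero] at hck
      omega
    have hple : p ≤ (Finset.univ.filter (fun x => IsConj a x)).card := by
      rw [hck]
      calc p = p ^ 1 := (pow_one p).symm
        _ ≤ p ^ k := Nat.pow_le_pow_right hp.pos hk1
    refine Finset.eq_of_subset_of_card_le hsub ?_
    rw [himgcard]; exact hple
  set Khat : MonoidAlgebra (ZMod p) G := ∑ z ∈ K, MonoidAlgebra.of (ZMod p) G z with hKhat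
  have hfac : ∀ a : G, 2 ≤ (Finset.univ.filter (fun x => IsConj a x)).card →
      classSum p G a = MonoidAlgebra.of (ZMod p) G a * Khat := by
    intro a ha
    rw [classSum, claim a ha, Finset.sum_image (fun x _ y _ hxy => mul_right_injective a hxy),
      hKhat, Finset.mul_sum]
    simp [map_mul]
  -- of z * Khat = Khat for z ∈ K
  have hzK : ∀ z : G, z ∈ commutator G → MonoidAlgebra.of (ZMod p) G z * Khat = Khat := by
    intro z hz
    rw [hKhat, Finset.mul_sum]
    simp_rw [← map_mul]
    refine Finset.sum_nbij' (fun w => z * w) (fun w => z⁻¹ * w) ?_ ?_ ?_ ?_ ?_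
    · intro w hw; rw [hmemK] at *
      exact mul_mem hz hw
    · intro w hw; rw [hmemK] at *
      exact mul_mem (inv_mem hz) hw
    · intro w _; group
    · intro w _; group
    · intro w _; rfl
  have hKhK : Khat * Khat = 0 := by
    nth_rewrite 1 [hKhat]
    rw [Finset.sum_mul]
    have : ∀ z ∈ K, MonoidAlgebra.of (ZMod p) G z * Khat = Khat := fun z hz =>
      hzK z ((hmemK z).mp hz)
    rw [Finset.sum_congr rfl this, Finset.sum_const, hKcard,
      ← Nat.cast_smul_eq_nsmul (ZMod p), ZMod.natCast_self, zero_smul]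
  have hcomm : Khat * MonoidAlgebra.of (ZMod p) G h = MonoidAlgebra.of (ZMod p) G h * Khat := by
    rw [hKhat, Finset.sum_mul, Finset.mul_sum]
    simp_rw [← map_mul]
    refine Finset.sum_nbij' (fun w => h⁻¹ * w * h) (fun w => h * w * h⁻¹) ?_ ?_ ?_ ?_ ?_
    · intro w hw; rw [hmemK] at *
      show h⁻¹ * w * h ∈ commutator G
      simpa [commutator_def] using (Subgroup.commutator_normal ⊤ ⊤).conj_mem w hw h⁻¹
    · intro w hw; rw [hmemK] at *
      show h * w * h⁻¹ ∈ commutator G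
      exact (Subgroup.commutator_normal ⊤ ⊤).conj_mem w hw h
    · intro w _; group
    · intro w _; group
    · intro w _; congr 1; group
  rw [hfac g hg, hfac h hh, mul_assoc, ← mul_assoc Khat, hcomm, mul_assoc, hKhK,
    mul_zero, mul_zero]
end

section
/- Let H be a group generated by two elements a and b whose commutator subgroup H' is central of prime order p. Then in any group ring of H over a commutative ring in which the binomial coefficients (1/p)·C(p,r) make sense as integers, (a+b)^p = a^p + b^p + ∑_{r=1}^{p−1} (1/p)·C(p,r) · a^r b^{p−r} · Ĥ', where Ĥ' = ∑_{h∈H'} h. -/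
open MonoidAlgebra
open scoped commutatorElement

def gb {M : Type*} [Ring M] (C : M) : ℕ → ℕ → M
  | _, 0 => 1
  | 0, _+1 => 0
  | n+1, r+1 => gb C n (r+1) + C ^ (n - r) * gb C n r

@[simp] lemma gb_zero_right {M : Type*} [Ring M] (C : M) (n : ℕ) : gb C n 0 = 1 := by
  cases n <;> rfl

lemma gb_succ_succ {M : Type*} [Ring M] (C : M) (n r : ℕ) :
    gb C (n+1) (r+1) = gb C n (r+1) + C ^ (n - r) * gb C n r := rfl

lemma gb_eq_zero {M : Type*} [Ring M] (C : M) {n r : ℕ} (h : n < r) : gb C n r = 0 := by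
  induction n generalizing r with
  | zero => cases r with
    | zero => omega
    | succ r => rfl
  | succ n ih =>
    cases r with
    | zero => omega
    | succ r => rw [gb_succ_succ, ih (by omega), ih (by omega), mul_zero, add_zero]

lemma gb_self {M : Type*} [Ring M] (C : M) (n : ℕ) : gb C n n = 1 := by
  induction n with
  | zero => rfl
  | succ n ih => rw [gb_succ_succ, gb_eq_zero C (by omega), ih, zero_add,
      Nat.sub_self, pow_zero, one_mul]

lemma map_gb {F M N : Type*} [Ring M] [Ring N] [FunLike F M N] [RingHomClass F M N] (C : M) (f : F) (n r : ℕ) :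
    f (gb C n r) = gb (f C) n r := by
  induction n generalizing r with
  | zero => cases r with
    | zero => simp [gb]
    | succ r => simp [gb]
  | succ n ih =>
    cases r with
    | zero => simp
    | succ r => rw [gb_succ_succ, gb_succ_succ, map_add, map_mul, map_pow, ih, ih]

lemma gb_one_int (n r : ℕ) : gb (1 : ℤ) n r = n.choose r := by
  induction n generalizing r with
  | zero => cases r with
    | zero => rfl
    | succ r => simp [gb]
  | succ n ih =>
    cases r with
    | zero => simp
    | succ r => rw [gb_succ_succ, ih, ih, one_pow, one_mul, Nat.choose_succ_succ]
                push_cast; ring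

section NC
variable {M : Type*} [Ring M] {A B C : M}

lemma Commute.gb' {x : M} (h : Commute x C) (n r : ℕ) : Commute x (gb C n r) := by
  induction n generalizing r with
  | zero => cases r with
    | zero => simp [_root_.gb]
    | succ r => simp [_root_.gb]
  | succ n ih =>
    cases r with
    | zero => simp
    | succ r => exact (ih (r+1)).add_right (((h.pow_right _)).mul_right (ih r))

lemma pow_B_A (hCA : Commute C A) (hCB : Commute C B) (hBA : B * A = A * B * C) :
    ∀ s : ℕ, B ^ s * A = A * B ^ s * C ^ s := by
  intro s
  induction s with
  | zero => simp
  | succ s ih =>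
    calc B ^ (s+1) * A = B ^ s * (B * A) := by rw [pow_succ, mul_assoc]
    _ = B ^ s * A * (B * C) := by rw [hBA]; noncomm_ring
    _ = A * B ^ s * C ^ s * (B * C) := by rw [ih]
    _ = A * B ^ s * (C ^ s * B) * C := by rw [← mul_assoc, mul_assoc _ (C^s) B]
    _ = A * B ^ s * (B * C ^ s) * C := by rw [(hCB.pow_left s).eq]
    _ = A * B ^ (s+1) * C ^ (s+1) := by
        rw [pow_succ, pow_succ]; noncomm_ring
  
lemma expand (hCA : Commute C A) (hCB : Commute C B) (hBA : B * A = A * B * C) (n : ℕ) :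
    (A + B) ^ n = ∑ r ∈ Finset.range (n+1), A ^ r * B ^ (n - r) * gb C n r := by
  induction n with
  | zero => simp
  | succ n ih =>
    rw [pow_succ, ih, Finset.sum_mul]
    have step : ∀ r ∈ Finset.range (n+1),
        A ^ r * B ^ (n - r) * gb C n r * (A + B)
          = A ^ (r+1) * B ^ (n - r) * (C ^ (n-r) * gb C n r)
            + A ^ r * B ^ (n + 1 - r) * gb C n r := by
      intro r hr
      have hr' : r ≤ n := by simpa [Nat.lt_succ_iff] using hr
      rw [mul_add]
      congr 1
      · calc A ^ r * B ^ (n-r) * gb C n r * A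
            = A ^ r * B ^ (n-r) * (A * gb C n r) := by
              rw [mul_assoc, (hCA.symm.gb' n r).symm.eq, ← mul_assoc]
        _ = A ^ r * (B ^ (n-r) * A) * gb C n r := by noncomm_ring
        _ = A ^ r * (A * B ^ (n-r) * C ^ (n-r)) * gb C n r := by
              rw [pow_B_A hCA hCB hBA]
        _ = A ^ (r+1) * B ^ (n - r) * (C ^ (n-r) * gb C n r) := by
              rw [pow_succ]; noncomm_ring
      · have : n + 1 - r = (n - r) + 1 := by omega
        rw [this, mul_assoc, (hCB.symm.gb' n r).symm.eq, pow_succ]; noncomm_ring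
    rw [Finset.sum_congr rfl step, Finset.sum_add_distrib]
    -- RHS: peel off r = 0
    rw [Finset.sum_range_succ' (fun r => A ^ r * B ^ (n + 1 - r) * gb C (n+1) r) (n+1)]
    simp only [pow_zero, one_mul, Nat.sub_zero, gb_zero_right, mul_one]
    have e2 : ∀ r, n + 1 - (r + 1) = n - r := fun r => by omega
    have expand2 : ∀ r ∈ Finset.range (n+1),
        A ^ (r+1) * B ^ (n + 1 - (r+1)) * gb C (n+1) (r+1)
          = A ^ (r+1) * B ^ (n - r) * gb C n (r+1)
            + A ^ (r+1) * B ^ (n - r) * (C ^ (n-r) * gb C n r) := by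
      intro r hr
      rw [e2, gb_succ_succ, mul_add, mul_assoc]
    rw [Finset.sum_congr rfl expand2, Finset.sum_add_distrib]
    -- now match pieces
    have key : ∑ r ∈ Finset.range (n+1), A ^ r * B ^ (n + 1 - r) * gb C n r
        = (∑ r ∈ Finset.range (n+1), A ^ (r+1) * B ^ (n - r) * gb C n (r+1)) + B ^ (n+1) := by
      rw [Finset.sum_range_succ' (fun r => A ^ r * B ^ (n + 1 - r) * gb C n r) n]
      simp only [pow_zero, one_mul, Nat.sub_zero, gb_zero_right, mul_one]
      congr 1
      rw [Finset.sum_range_succ]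
      rw [gb_eq_zero C (by omega : n < n + 1), mul_zero, add_zero]
      exact Finset.sum_congr rfl fun r hr => by rw [e2]
    rw [key]
    abel

end NC

lemma gb_absorb {M : Type*} [CommRing M] (X : M) (n r : ℕ) :
    (X ^ (r+1) - 1) * gb X n (r+1) = (X ^ (n - r) - 1) * gb X n r := by
  induction n generalizing r with
  | zero => cases r <;> simp [gb]
  | succ n ih =>
    rcases le_or_gt r n with hr | hr
    · cases r with
      | zero =>
        have p1 : X * X ^ n = X ^ (n+1) := by rw [← pow_succ']
        have h0 := ih 0
        rw [gb_succ_succ, gb_zero_right]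
        simp only [Nat.sub_zero, gb_zero_right, mul_one] at h0 ⊢
        linear_combination h0 + (X - 1) * p1
      | succ s =>
        have h1 := ih (s+1)
        have h2 := ih s
        have p1 : X ^ (n - (s+1)) * X ^ (s+2) = X ^ (n+1) := by
          rw [← pow_add]; congr 1; omega
        have p2 : X ^ (n - s) * X ^ (s+1) = X ^ (n+1) := by
          rw [← pow_add]; congr 1; omega
        rw [gb_succ_succ, gb_succ_succ]
        have e : n + 1 - (s + 1) = n - s := by omega
        rw [e]
        linear_combination h1 + X ^ (n-s) * h2 + gb X n (s+1) * p1 - gb X n (s+1) * p2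
    · rw [gb_eq_zero X (by omega)]
      rcases eq_or_lt_of_le (Nat.succ_le_of_lt hr) with h | h
      · rw [← h, gb_self, Nat.sub_self, pow_zero, sub_self, zero_mul, mul_zero]
      · rw [gb_eq_zero X (by omega)]; simp

section ZPart

variable (p : ℕ) (hp : p.Prime)

local notation "G" => Multiplicative (ZMod p)

noncomputable def qgen : MonoidAlgebra ℤ (Multiplicative (ZMod p)) :=
  MonoidAlgebra.of ℤ (Multiplicative (ZMod p)) (Multiplicative.ofAdd 1)

lemma qgen_pow (i : ℕ) :
    (qgen p) ^ i = MonoidAlgebra.of ℤ G (Multiplicative.ofAdd (i : ZMod p)) := by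
  rw [qgen, ← map_pow]
  congr 1
  rw [← ofAdd_nsmul]
  congr 1
  simp [nsmul_eq_mul]

lemma qgen_pow_p : (qgen p) ^ p = 1 := by
  rw [qgen_pow]
  simp [ZMod.natCast_self]
  rfl

lemma gb_qgen_mul (r : ℕ) : r ≤ p →
    ((qgen p) ^ r - 1) * gb (qgen p) p r = 0 := by
  induction r with
  | zero => intro _; simp
  | succ r ih =>
    intro hr
    have hr' : r ≤ p := by omega
    have hmul : (qgen p) ^ r * gb (qgen p) p r = gb (qgen p) p r := by
      have := ih hr'
      rw [sub_mul, one_mul, sub_eq_zero] at this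
      exact this
    have key := gb_absorb (qgen p) p r
    rw [key]
    have : (qgen p) ^ (p - r) * gb (qgen p) p r = gb (qgen p) p r := by
      calc (qgen p) ^ (p - r) * gb (qgen p) p r
          = (qgen p) ^ (p - r) * ((qgen p) ^ r * gb (qgen p) p r) := by rw [hmul]
        _ = (qgen p) ^ (p - r + r) * gb (qgen p) p r := by rw [← mul_assoc, ← pow_add]
        _ = gb (qgen p) p r := by rw [Nat.sub_add_cancel hr', qgen_pow_p, one_mul]
    rw [sub_mul, one_mul, this, sub_self]


lemma qS_eq [NeZero p] :
    (∑ i ∈ Finset.range p, (qgen p) ^ i) = ∑ g : G, MonoidAlgebra.of ℤ G g := by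
  refine Finset.sum_nbij' (fun n => Multiplicative.ofAdd (n : ZMod p))
    (fun g => (Multiplicative.toAdd g).val) ?_ ?_ ?_ ?_ ?_
  · intro a _; exact Finset.mem_univ _
  · intro g _; exact Finset.mem_range.2 (ZMod.val_lt _)
  · intro a ha; exact ZMod.val_cast_of_lt (Finset.mem_range.1 ha)
  · intro g _
    show Multiplicative.ofAdd (((Multiplicative.toAdd g).val : ZMod p)) = g
    rw [ZMod.natCast_rightInverse _]
    exact ofAdd_toAdd g
  · intro a _; rw [qgen_pow]

lemma gb_qgen_eq (hp : p.Prime) (r : ℕ) (hr1 : 1 ≤ r) (hr2 : r < p) :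
    gb (qgen p) p r = (p.choose r / p : ℕ) • ∑ i ∈ Finset.range p, (qgen p) ^ i := by
  haveI : NeZero p := ⟨hp.pos.ne'⟩
  haveI := Fact.mk hp
  set x := gb (qgen p) p r with hxdef
  set t := Multiplicative.ofAdd ((r : ZMod p)) with htdef
  have hx : MonoidAlgebra.of ℤ G t * x = x := by
    have h := gb_qgen_mul p r (le_of_lt hr2)
    rw [sub_mul, one_mul, sub_eq_zero] at h
    rw [← qgen_pow]; exact h
  have hshift : ∀ g : G, x.coeff (g * t) = x.coeff g := by
    intro g
    have h : (MonoidAlgebra.of ℤ G t * x).coeff (t * g) = x.coeff (t * g) := by rw [hx]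
    rw [MonoidAlgebra.of_apply, MonoidAlgebra.coeff_single_mul_apply, inv_mul_cancel_left,
      one_mul] at h
    rw [mul_comm g t, ← h]
  have hr0 : (r : ZMod p) ≠ 0 := by
    rw [Ne, ZMod.natCast_eq_zero_iff]
    intro hdvd
    exact absurd (Nat.le_of_dvd (by omega) hdvd) (by omega)
  have hconst : ∀ g : G, x.coeff g = x.coeff 1 := by
    have hk : ∀ k : ℕ, x.coeff (Multiplicative.ofAdd ((k : ZMod p) * (r : ZMod p))) = x.coeff 1 := by
      intro k
      induction k with
      | zero => simp
      | succ k ih =>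
        have : ((k+1 : ℕ) : ZMod p) * (r : ZMod p)
            = (k : ZMod p) * (r : ZMod p) + (r : ZMod p) := by push_cast; ring
        rw [this, ofAdd_add, hshift, ih]
    intro g
    obtain ⟨k, hk'⟩ : ∃ k : ℕ, (k : ZMod p) * (r : ZMod p) = Multiplicative.toAdd g :=
      ⟨(Multiplicative.toAdd g * (r : ZMod p)⁻¹).val, by
        rw [ZMod.natCast_rightInverse _]
        exact inv_mul_cancel_right₀ hr0 _⟩
    have := hk k
    rwa [hk'] at this
  have hx_eq : x = (x.coeff 1) • ∑ g : G, MonoidAlgebra.of ℤ G g := by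
    ext g
    rw [MonoidAlgebra.coeff_smul_apply, smul_eq_mul]
    have hS : (∑ g' : G, MonoidAlgebra.of ℤ G g').coeff g = 1 := by
      rw [MonoidAlgebra.coeff_sum, Finset.sum_apply']
      simp [MonoidAlgebra.of_apply, Finsupp.single_apply]
    rw [hS, mul_one, hconst g]
  -- augmentation
  set eps := (MonoidAlgebra.lift ℤ ℤ G) 1 with heps
  have heps_of : ∀ g : G, eps (MonoidAlgebra.of ℤ G g) = 1 := by
    intro g; rw [heps, MonoidAlgebra.lift_of]; rfl
  have h1 : eps x = p.choose r := by
    rw [hxdef, map_gb, heps, qgen]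
    rw [MonoidAlgebra.lift_of]
    show gb ((1 : G →* ℤ) (Multiplicative.ofAdd 1)) p r = _
    rw [MonoidHom.one_apply, gb_one_int]
  have h2 : eps x = (x.coeff 1) * p := by
    conv_lhs => rw [hx_eq]
    rw [map_smul, map_sum]
    simp only [heps_of]
    rw [Finset.sum_const, Finset.card_univ, Fintype.card_multiplicative, ZMod.card]
    simp [smul_eq_mul, mul_comm]
  have hdvd : p ∣ p.choose r := hp.dvd_choose_self (by omega) hr2
  have hx1 : (x.coeff 1) = ((p.choose r / p : ℕ) : ℤ) := by
    have hpz : (p : ℤ) ≠ 0 := by exact_mod_cast hp.pos.ne'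
    apply mul_right_cancel₀ hpz
    rw [← h2, h1]
    rw [← Nat.cast_mul, Nat.div_mul_cancel hdvd]
  rw [hx_eq, hx1, qS_eq p, natCast_zsmul]


end ZPart

/-- `Ĥ' = ∑_{h ∈ H'} h` in the group ring. -/
noncomputable def subgroupSum (R : Type*) [CommRing R] (H : Type*) [Group H]
    (D : Subgroup H) [Fintype D] : MonoidAlgebra R H :=
  ∑ d : D, MonoidAlgebra.of R H (d : H)

/-- If `H = ⟨a, b⟩` has central commutator subgroup `H'` of prime order `p`, then in
any group ring of `H`,
`(a+b)^p = a^p + b^p + ∑_{r=1}^{p-1} (1/p)·C(p,r) · a^r b^{p-r} · Ĥ'`. -/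
theorem add_pow_p_formula (R : Type*) [CommRing R] (H : Type*) [Group H]
    [Fintype (commutator H)] (p : ℕ) (hp : p.Prime) (a b : H)
    (hgen : Subgroup.closure ({a, b} : Set H) = ⊤)
    (hcentral : commutator H ≤ Subgroup.center H)
    (hcard : Nat.card (commutator H) = p) :
    (MonoidAlgebra.of R H a + MonoidAlgebra.of R H b) ^ p =
      MonoidAlgebra.of R H (a ^ p) + MonoidAlgebra.of R H (b ^ p) +
      ∑ r ∈ Finset.Ico 1 p, (p.choose r / p) •
        (MonoidAlgebra.of R H (a ^ r * b ^ (p - r)) * subgroupSum R H (commutator H)) := by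
  haveI : NeZero p := ⟨hp.pos.ne'⟩
  haveI := Fact.mk hp
  set c : H := ⁅b, a⁆ with hc
  have hc_mem : c ∈ commutator H :=
    Subgroup.commutator_mem_commutator (Subgroup.mem_top b) (Subgroup.mem_top a)
  have hc_central : ∀ x : H, x * c = c * x := fun x =>
    Subgroup.mem_center_iff.1 (hcentral hc_mem) x
  -- c ≠ 1
  have hc_ne : c ≠ 1 := by
    intro h1
    have hab : Commute b a := commutatorElement_eq_one_iff_commute.1 h1
    have hcent : ∀ x : H, x ∈ Subgroup.centralizer ({a, b} : Set H) := by
      intro x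
      have hsub : Subgroup.closure ({a, b} : Set H) ≤ Subgroup.centralizer ({a, b} : Set H) := by
        apply (Subgroup.closure_le _).2
        intro y hy
        apply Subgroup.mem_centralizer_iff.2
        rintro z (hz | hz) <;> rcases hy with hy | hy <;>
          subst hz <;> subst hy
        · rfl
        · exact hab.symm.eq
        · exact hab.eq
        · rfl
      rw [hgen] at hsub
      exact hsub (Subgroup.mem_top x)
    have htop : (⊤ : Subgroup H) ≤ Subgroup.center H := by
      rw [← hgen]
      apply (Subgroup.closure_le _).2
      intro y hy
      rw [SetLike.mem_coe, Subgroup.mem_center_iff]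
      intro g
      exact (Subgroup.mem_centralizer_iff.1 (hcent g) y hy).symm
    have hbot : commutator H = ⊥ := by
      apply le_bot_iff.1
      rw [commutator_def, Subgroup.commutator_le]
      intro g1 _ g2 _
      rw [Subgroup.mem_bot, commutatorElement_eq_one_iff_commute]
      exact Subgroup.mem_center_iff.1 (htop (Subgroup.mem_top g2)) g1
    rw [hbot, Subgroup.card_bot] at hcard
    exact absurd hcard.symm hp.one_lt.ne'
  have horder : orderOf c = p := by
    have h1 : orderOf (⟨c, hc_mem⟩ : commutator H) ∣ p := hcard ▸ orderOf_dvd_natCard _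
    rw [Subgroup.orderOf_mk] at h1
    rcases hp.eq_one_or_self_of_dvd _ h1 with h | h
    · exact absurd (orderOf_eq_one_iff.1 h) hc_ne
    · exact h
  have hcp : c ^ p = 1 := horder ▸ pow_orderOf_eq_one c
  have hsum : subgroupSum R H (commutator H)
      = ∑ i ∈ Finset.range p, (MonoidAlgebra.of R H c) ^ i := by
    rw [subgroupSum]
    have hbij : Function.Bijective
        (fun i : Fin p => (⟨c ^ (i : ℕ), pow_mem hc_mem _⟩ : commutator H)) := by
      rw [Fintype.bijective_iff_injective_and_card]
      constructor
      · intro i j hij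
        have h2 : c ^ (i : ℕ) = c ^ (j : ℕ) := congrArg Subtype.val hij
        exact Fin.ext (pow_injOn_Iio_orderOf
          (by rw [horder]; exact Set.mem_Iio.2 i.isLt)
          (by rw [horder]; exact Set.mem_Iio.2 j.isLt) h2)
      · rw [Fintype.card_fin, ← Nat.card_eq_fintype_card, hcard]
    calc ∑ d : commutator H, MonoidAlgebra.of R H (d : H)
        = ∑ i : Fin p, MonoidAlgebra.of R H (c ^ (i : ℕ)) :=
          (Fintype.sum_bijective _ hbij _ _ (fun i => rfl)).symm
      _ = ∑ i : Fin p, (MonoidAlgebra.of R H c) ^ (i : ℕ) := by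
          exact Finset.sum_congr rfl fun i _ => map_pow _ _ _
      _ = ∑ i ∈ Finset.range p, (MonoidAlgebra.of R H c) ^ i :=
          Fin.sum_univ_eq_sum_range _ _
  set A := MonoidAlgebra.of R H a with hA
  set B := MonoidAlgebra.of R H b with hB
  set C := MonoidAlgebra.of R H c with hC
  have hCA : Commute C A := by
    show C * A = A * C
    rw [hA, hC, ← map_mul, ← map_mul, hc_central a]
  have hCB : Commute C B := by
    show C * B = B * C
    rw [hB, hC, ← map_mul, ← map_mul, hc_central b]
  have hba_group : b * a = a * b * c := by
    rw [hc_central (a * b), hc]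
    group
  have hBA : B * A = A * B * C := by
    rw [hA, hB, hC, ← map_mul, ← map_mul, ← map_mul, hba_group]
  have hCp : C ^ p = 1 := by rw [hC, ← map_pow, hcp, map_one]
  have hpow_mod : ∀ n : ℕ, C ^ n = C ^ (n % p) := by
    intro n
    conv_lhs => rw [← Nat.div_add_mod n p]
    rw [pow_add, pow_mul, hCp, one_pow, one_mul]
  haveI : Fact (1 < p) := ⟨hp.one_lt⟩
  let f : Multiplicative (ZMod p) →* MonoidAlgebra R H := {
    toFun := fun g => C ^ (Multiplicative.toAdd g).val
    map_one' := by
      show C ^ (0 : ZMod p).val = 1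
      rw [ZMod.val_zero, pow_zero]
    map_mul' := by
      intro x y
      show C ^ (Multiplicative.toAdd x + Multiplicative.toAdd y).val = _
      rw [ZMod.val_add, ← hpow_mod, pow_add] }
  let psi := (MonoidAlgebra.lift ℤ (MonoidAlgebra R H) (Multiplicative (ZMod p))) f
  have hpsiq : psi (qgen p) = C := by
    rw [qgen, MonoidAlgebra.lift_of]
    show C ^ (Multiplicative.toAdd (Multiplicative.ofAdd (1 : ZMod p))).val = C
    rw [toAdd_ofAdd, ZMod.val_one, pow_one]
  have hgbC : ∀ r, 1 ≤ r → r < p →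
      gb C p r = (p.choose r / p) • ∑ i ∈ Finset.range p, C ^ i := by
    intro r h1 h2
    have key := congrArg psi (gb_qgen_eq p hp r h1 h2)
    rw [map_gb _ psi, hpsiq, map_nsmul, map_sum] at key
    rw [key]
    congr 1
    exact Finset.sum_congr rfl fun i _ => by rw [map_pow, hpsiq]
  rw [expand hCA hCB hBA p, Finset.sum_range_succ, Finset.range_eq_Ico,
    Finset.sum_eq_sum_Ico_succ_bot hp.pos]
  simp only [pow_zero, one_mul, Nat.sub_zero, Nat.sub_self, gb_zero_right, mul_one,
    gb_self]
  have hmid : ∀ r ∈ Finset.Ico 1 p, A ^ r * B ^ (p - r) * gb C p r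
      = (p.choose r / p) •
        (MonoidAlgebra.of R H (a ^ r * b ^ (p - r)) * subgroupSum R H (commutator H)) := by
    intro r hr
    rw [Finset.mem_Ico] at hr
    rw [hgbC r hr.1 hr.2, hsum, map_mul, map_pow, map_pow, mul_smul_comm]
  rw [Finset.sum_congr rfl hmid, map_pow, map_pow]
  abel
end

section
/- Let H be a group generated by a and b with commutator subgroup H' central of order p, p prime. If h ∈ H is not central and c_1,…,c_k ∈ {a,b} with 1 ≤ k ≤ p−1, and the product c_1⋯c_p (with c_i ∈ {a,b}) lies in the coset a^r b^{p−r} H' for some 1 ≤ r ≤ p−1, then any cyclic rotation c_{k+1}⋯c_p c_1⋯c_k of the product is distinct from c_1⋯c_p. -/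
open scoped commutatorElement

section helpers
variable {H : Type*} [Group H]

lemma my_bl (hc : ∀ g h x : H, ⁅g, h⁆ * x = x * ⁅g, h⁆)
    (g₁ g₂ h : H) : ⁅g₁ * g₂, h⁆ = ⁅g₁, h⁆ * ⁅g₂, h⁆ := by
  have h1 : ⁅g₁ * g₂, h⁆ = g₁ * ⁅g₂, h⁆ * (h * g₁⁻¹ * h⁻¹) := by
    simp only [commutatorElement_def]; group
  have h2 : ⁅g₂, h⁆ * g₁ * (h * g₁⁻¹ * h⁻¹) = ⁅g₂, h⁆ * ⁅g₁, h⁆ := by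
    simp only [commutatorElement_def]; group
  rw [h1, ← hc g₂ h g₁, h2, hc]

lemma my_br (hc : ∀ g h x : H, ⁅g, h⁆ * x = x * ⁅g, h⁆)
    (g h₁ h₂ : H) : ⁅g, h₁ * h₂⁆ = ⁅g, h₁⁆ * ⁅g, h₂⁆ := by
  have : ⁅g, h₁ * h₂⁆ = ⁅h₁ * h₂, g⁆⁻¹ := by rw [commutatorElement_inv]
  rw [this, my_bl hc, mul_inv_rev, commutatorElement_inv, commutatorElement_inv, hc]

lemma my_bp (hc : ∀ g h x : H, ⁅g, h⁆ * x = x * ⁅g, h⁆)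
    (g h : H) (m : ℕ) : ⁅g ^ m, h⁆ = ⁅g, h⁆ ^ m := by
  induction m with
  | zero => simp
  | succ n ih => rw [pow_succ, my_bl hc, ih, pow_succ]

lemma my_bp' (hc : ∀ g h x : H, ⁅g, h⁆ * x = x * ⁅g, h⁆)
    (g h : H) (n : ℕ) : ⁅g, h ^ n⁆ = ⁅g, h⁆ ^ n := by
  rw [← commutatorElement_inv, my_bp hc, ← inv_pow, commutatorElement_inv]

lemma my_bz (hc : ∀ g h x : H, ⁅g, h⁆ * x = x * ⁅g, h⁆)
    (a b x : H) (t : ℤ) : ⁅x, ⁅a, b⁆ ^ t⁆ = 1 ∧ ⁅⁅a, b⁆ ^ t, x⁆ = 1 := by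
  have hcz : Commute ⁅a, b⁆ x := hc a b x
  have hcom : Commute (⁅a, b⁆ ^ t) x := hcz.zpow_left t
  exact ⟨hcom.symm.commutator_eq, hcom.commutator_eq⟩

lemma my_pair (hc : ∀ g h x : H, ⁅g, h⁆ * x = x * ⁅g, h⁆)
    (a b : H) (m n mm nn : ℕ) (t tt : ℤ) :
    ⁅a ^ m * b ^ n * ⁅a, b⁆ ^ t, a ^ mm * b ^ nn * ⁅a, b⁆ ^ tt⁆
      = ⁅a, b⁆ ^ ((m : ℤ) * nn - (n : ℤ) * mm) := by
  rw [my_bl hc, my_bl hc, (my_bz hc a b _ t).2, mul_one,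
    my_br hc, my_br hc, (my_bz hc a b _ tt).1, mul_one,
    my_br hc, my_br hc, (my_bz hc a b _ tt).1, mul_one]
  simp only [my_bp hc, my_bp' hc, commutatorElement_self, one_pow, one_mul, mul_one]
  rw [← commutatorElement_inv a b, ← pow_mul, ← pow_mul, inv_pow,
    ← zpow_natCast ⁅a, b⁆ (nn * m), ← zpow_natCast ⁅a, b⁆ (mm * n), ← zpow_neg, ← zpow_add]
  congr 1
  push_cast
  ring

end helpers

section more
variable {H : Type*} [Group H]

lemma my_swap (hc : ∀ g h x : H, ⁅g, h⁆ * x = x * ⁅g, h⁆)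
    (a b : H) (m : ℕ) : b * a ^ m = a ^ m * b * ⁅a, b⁆ ^ (-(m : ℤ)) := by
  have h1 : ⁅b, a ^ m⁆ = ⁅a, b⁆ ^ (-(m : ℤ)) := by
    rw [my_bp' hc, ← commutatorElement_inv a b, inv_pow, ← zpow_natCast ⁅a, b⁆ m, ← zpow_neg]
  have h2 : b * a ^ m = ⁅b, a ^ m⁆ * a ^ m * b := by
    simp only [commutatorElement_def]; group
  have hz : ∀ y : H, ⁅a, b⁆ ^ (-(m : ℤ)) * y = y * ⁅a, b⁆ ^ (-(m : ℤ)) := by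
    intro y
    have : Commute ⁅a, b⁆ y := hc a b y
    exact (this.zpow_left _).eq
  rw [h2, h1, hz (a ^ m), mul_assoc, hz b, ← mul_assoc]

lemma my_decomp (hc : ∀ g h x : H, ⁅g, h⁆ * x = x * ⁅g, h⁆) (a b : H) :
    ∀ L : List H, (∀ x ∈ L, x = a ∨ x = b) →
      ∃ (m n : ℕ) (t : ℤ), m + n = L.length ∧ L.prod = a ^ m * b ^ n * ⁅a, b⁆ ^ t := by
  intro L
  induction L with
  | nil => intro _; exact ⟨0, 0, 0, by simp⟩
  | cons x L ih =>
    intro hmem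
    obtain ⟨m, n, t, hlen, hprod⟩ := ih (fun y hy => hmem y (List.mem_cons_of_mem x hy))
    have hzc : ∀ (s : ℤ) (y : H), ⁅a, b⁆ ^ s * y = y * ⁅a, b⁆ ^ s := by
      intro s y
      have : Commute ⁅a, b⁆ y := hc a b y
      exact (this.zpow_left s).eq
    rcases hmem x (List.mem_cons_self (a := x) (l := L)) with hx | hx
    · refine ⟨m + 1, n, t, by simp [← hlen]; omega, ?_⟩
      rw [List.prod_cons, hx, hprod, ← mul_assoc, ← mul_assoc, ← pow_succ' a m]
    · refine ⟨m, n + 1, t - m, by simp [← hlen]; omega, ?_⟩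
      rw [List.prod_cons, hx, hprod, ← mul_assoc, ← mul_assoc, my_swap hc a b m,
        mul_assoc _ (⁅a, b⁆ ^ (-(m : ℤ))) (b ^ n), hzc (-(m : ℤ)) (b ^ n),
        ← mul_assoc, mul_assoc (a ^ m * b * b ^ n), ← zpow_add, mul_assoc (a ^ m) b (b ^ n),
        ← pow_succ' b n]
      have he : -(m : ℤ) + t = t - m := by ring
      rw [he]

end more



/-- In a group `H = ⟨a,b⟩` with central commutator subgroup of prime order `p`, a
product `c₁⋯c_p` of letters `cᵢ ∈ {a,b}` lying in a coset `a^r b^{p-r} H'` with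
`1 ≤ r ≤ p-1` differs from each of its proper cyclic rotations. -/
theorem rotation_ne_of_mixed_coset (H : Type*) [Group H] (p : ℕ) (hp : p.Prime)
    (a b : H) (hgen : Subgroup.closure ({a, b} : Set H) = ⊤)
    (hcentral : commutator H ≤ Subgroup.center H)
    (hcard : Nat.card (commutator H) = p)
    (c : Fin p → H) (hc : ∀ i, c i = a ∨ c i = b)
    (r : ℕ) (hr1 : 1 ≤ r) (hr2 : r ≤ p - 1)
    (hcoset : ∃ z ∈ commutator H, (List.ofFn c).prod = a ^ r * b ^ (p - r) * z)
    (k : ℕ) (hk1 : 1 ≤ k) (hk2 : k ≤ p - 1) :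
    ((List.ofFn c).rotate k).prod ≠ (List.ofFn c).prod := by
  have hp2 : 2 ≤ p := hp.two_le
  have hzmem : ⁅a, b⁆ ∈ commutator H := by
    rw [commutator_def]
    exact Subgroup.commutator_mem_commutator (Subgroup.mem_top a) (Subgroup.mem_top b)
  have hcomm : ∀ g h x : H, ⁅g, h⁆ * x = x * ⁅g, h⁆ := by
    intro g h x
    have hm : ⁅g, h⁆ ∈ commutator H := by
      rw [commutator_def]
      exact Subgroup.commutator_mem_commutator (Subgroup.mem_top g) (Subgroup.mem_top h)
    exact ((Subgroup.mem_center_iff.mp (hcentral hm)) x).symm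
  -- ⁅a, b⁆ ≠ 1
  have hz1 : ⁅a, b⁆ ≠ 1 := by
    intro h1
    have hab : Commute a b := commutatorElement_eq_one_iff_commute.mp h1
    have hallab : ∀ g : H, Commute a g ∧ Commute b g := by
      intro g
      constructor
      · have hsub : ({a, b} : Set H) ⊆ ↑(Subgroup.centralizer {a}) := by
          rintro x (rfl | rfl)
          · exact Subgroup.mem_centralizer_singleton_iff.mpr rfl
          · exact Subgroup.mem_centralizer_singleton_iff.mpr hab.eq.symm
        have hle := (Subgroup.closure_le _).mpr hsub
        rw [hgen] at hle
        exact ((Subgroup.mem_centralizer_singleton_iff.mp (hle (Subgroup.mem_top g))).symm :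
          Commute a g)
      · have hsub : ({a, b} : Set H) ⊆ ↑(Subgroup.centralizer {b}) := by
          rintro x (rfl | rfl)
          · exact Subgroup.mem_centralizer_singleton_iff.mpr hab.eq
          · exact Subgroup.mem_centralizer_singleton_iff.mpr rfl
        have hle := (Subgroup.closure_le _).mpr hsub
        rw [hgen] at hle
        exact ((Subgroup.mem_centralizer_singleton_iff.mp (hle (Subgroup.mem_top g))).symm :
          Commute b g)
    have hall : ∀ g h : H, Commute g h := by
      intro g h
      have hsub : ({a, b} : Set H) ⊆ ↑(Subgroup.centralizer {h}) := by
        rintro x (rfl | rfl)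
        · exact Subgroup.mem_centralizer_singleton_iff.mpr ((hallab h).1.eq)
        · exact Subgroup.mem_centralizer_singleton_iff.mpr ((hallab h).2.eq)
      have hle := (Subgroup.closure_le _).mpr hsub
      rw [hgen] at hle
      exact ((Subgroup.mem_centralizer_singleton_iff.mp (hle (Subgroup.mem_top g))) :
        Commute g h)
    have hbot : commutator H = ⊥ := by
      rw [commutator_def, eq_bot_iff]
      exact Subgroup.commutator_le.mpr fun g _ h _ =>
        Subgroup.mem_bot.mpr (hall g h).commutator_eq
    rw [hbot, Subgroup.card_bot] at hcard
    omega
  -- order of the commutator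
  have hdvd : orderOf ⁅a, b⁆ ∣ p := hcard ▸ Subgroup.orderOf_dvd_natCard _ hzmem
  have hord : orderOf ⁅a, b⁆ = p :=
    ((hp.eq_one_or_self_of_dvd _ hdvd).resolve_left
      (by simpa [orderOf_eq_one_iff] using hz1))
  haveI hfin : Finite (commutator H) :=
    Nat.finite_of_card_ne_zero (by rw [hcard]; omega)
  have heqz : Subgroup.zpowers ⁅a, b⁆ = commutator H :=
    Subgroup.eq_of_le_of_card_ge (Subgroup.zpowers_le.mpr hzmem)
      (by rw [hcard, Nat.card_zpowers, hord])
  obtain ⟨w, hw, hprodL⟩ := hcoset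
  rw [← heqz] at hw
  obtain ⟨u, hu⟩ := Subgroup.mem_zpowers_iff.mp hw
  rw [← hu] at hprodL
  -- decompose take and drop
  have hmemL : ∀ x ∈ List.ofFn c, x = a ∨ x = b := by
    intro x hx
    rw [List.mem_ofFn] at hx
    obtain ⟨i, rfl⟩ := hx
    exact hc i
  have hkp : k ≤ p := le_trans hk2 (Nat.sub_le p 1)
  have hlen : (List.ofFn c).length = p := List.length_ofFn (f := c)
  obtain ⟨m1, n1, t1, hlen1, hP1⟩ := my_decomp hcomm a b ((List.ofFn c).take k)
    (fun x hx => hmemL x (List.take_subset k _ hx))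
  obtain ⟨m2, n2, t2, hlen2, hP2⟩ := my_decomp hcomm a b ((List.ofFn c).drop k)
    (fun x hx => hmemL x (List.drop_subset k _ hx))
  rw [List.length_take, hlen, min_eq_left hkp] at hlen1
  rw [List.length_drop, hlen] at hlen2
  -- pairing with b
  have hXb : ∀ (m n : ℕ) (t : ℤ), ⁅a ^ m * b ^ n * ⁅a, b⁆ ^ t, b⁆ = ⁅a, b⁆ ^ (m : ℤ) := by
    intro m n t
    have := my_pair hcomm a b m n 0 1 t 0
    simpa using this
  have hsplit : (List.ofFn c).prod = ((List.ofFn c).take k).prod * ((List.ofFn c).drop k).prod := by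
    rw [← List.prod_append, List.take_append_drop]
  have e1 : ⁅a, b⁆ ^ ((r : ℤ)) = ⁅a, b⁆ ^ ((m1 : ℤ) + (m2 : ℤ)) := by
    have c1 : ⁅(List.ofFn c).prod, b⁆ = ⁅a, b⁆ ^ ((r : ℤ)) := by
      rw [hprodL, hXb]
    have c2 : ⁅(List.ofFn c).prod, b⁆ = ⁅a, b⁆ ^ ((m1 : ℤ) + (m2 : ℤ)) := by
      rw [hsplit, my_bl hcomm, hP1, hP2, hXb, hXb, ← zpow_add]
    rw [← c1, c2]
  have hdvd1 : (p : ℤ) ∣ ((m1 : ℤ) + m2) - r := by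
    rw [← hord, orderOf_dvd_iff_zpow_eq_one, zpow_sub, ← e1]
    simp
  -- the rotation
  intro heq
  have hrot : (List.ofFn c).rotate k = (List.ofFn c).drop k ++ (List.ofFn c).take k :=
    List.rotate_eq_drop_append_take (by rw [hlen]; exact hkp)
  rw [hrot, List.prod_append, hsplit] at heq
  have hc12 : ⁅((List.ofFn c).take k).prod, ((List.ofFn c).drop k).prod⁆ = 1 :=
    commutatorElement_eq_one_iff_commute.mpr heq.symm
  rw [hP1, hP2, my_pair hcomm] at hc12
  have hdvd2 : (p : ℤ) ∣ (m1 : ℤ) * n2 - (n1 : ℤ) * m2 := by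
    rw [← hord, orderOf_dvd_iff_zpow_eq_one]
    exact hc12
  have hn1 : (n1 : ℤ) = (k : ℤ) - m1 := by omega
  have hn2 : (n2 : ℤ) = (p : ℤ) - k - m2 := by omega
  have key : (k : ℤ) * r =
      (m1 : ℤ) * p - ((m1 : ℤ) * n2 - (n1 : ℤ) * m2) - (k : ℤ) * (((m1 : ℤ) + m2) - r) := by
    rw [hn1, hn2]; ring
  have hdvdkr : (p : ℤ) ∣ (k : ℤ) * r := by
    rw [key]
    exact dvd_sub (dvd_sub (Dvd.intro_left m1 rfl) hdvd2) (Dvd.dvd.mul_left hdvd1 k)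
  have hdvdkr' : p ∣ k * r := by exact_mod_cast hdvdkr
  rcases (Nat.Prime.dvd_mul hp).mp hdvdkr' with h | h
  · have := Nat.le_of_dvd (by omega) h; omega
  · have := Nat.le_of_dvd (by omega) h; omega
end

section
/- Let G be a finite p-group with commutator subgroup G' of order p, where p > 2. Then for every x in the group of normalized units V(𝔽_p G), the p-th power x^p is central in 𝔽_p G. In particular V(𝔽_p G)^p ⊆ ζ(V(𝔽_p G)). -/
open MonoidAlgebra
open scoped commutatorElement

/-- The augmentation map `𝔽_p G → 𝔽_p`. -/
noncomputable def aug (p : ℕ) [Fact p.Prime] (G : Type*) [Group G] :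
    MonoidAlgebra (ZMod p) G →ₐ[ZMod p] ZMod p :=
  MonoidAlgebra.lift (ZMod p) (ZMod p) G 1

/-- The group `V(𝔽_p G)` of normalized units (units of augmentation `1`). -/
noncomputable def V (p : ℕ) [Fact p.Prime] (G : Type*) [Group G] :
    Subgroup (MonoidAlgebra (ZMod p) G)ˣ :=
  (Units.map (aug p G : MonoidAlgebra (ZMod p) G →* ZMod p)).ker

/-- In a char-`p` algebra with a central element `δ` with `δ ^ p = 0` such that all
ring commutators lie in `δ • A`, every `p`-th power is central. -/
theorem aux_pow_central (p : ℕ) [Fact p.Prime] (A : Type*) [Ring A] [Algebra (ZMod p) A]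
    [Nontrivial A] (δ : A) (hδc : ∀ y, δ * y = y * δ) (hδp : δ ^ p = 0)
    (hcomm : ∀ a b : A, ∃ y, a * b - b * a = δ * y) (x y : A) :
    x ^ p * y = y * x ^ p := by
  haveI : CharP A p := charP_of_injective_algebraMap' (ZMod p) p
  haveI : Nontrivial (Module.End (ZMod p) A) :=
    ⟨⟨1, 0, fun h => one_ne_zero (α := A) (by simpa using LinearMap.congr_fun h 1)⟩⟩
  haveI : CharP (Module.End (ZMod p) A) p :=
    charP_of_injective_algebraMap' (ZMod p) p
  have hδnc : ∀ (n : ℕ) (u : A), Commute (δ ^ n) u :=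
    fun n u => Commute.pow_left (hδc u) n
  have key : ∀ (n : ℕ) (y : A), ∃ z : A,
      ((LinearMap.mulLeft (ZMod p) x - LinearMap.mulRight (ZMod p) x) ^ n) y = δ ^ n * z := by
    intro n
    induction n with
    | zero => exact fun y => ⟨y, by simp⟩
    | succ n ih =>
      intro y
      obtain ⟨z, hz⟩ := ih y
      obtain ⟨w, hw⟩ := hcomm x z
      refine ⟨w, ?_⟩
      rw [pow_succ', Module.End.mul_apply, hz, LinearMap.sub_apply, LinearMap.mulLeft_apply,
        LinearMap.mulRight_apply]
      calc x * (δ ^ n * z) - δ ^ n * z * x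
          = δ ^ n * (x * z) - δ ^ n * (z * x) := by
            rw [← mul_assoc, ← (hδnc n x).eq, mul_assoc, mul_assoc]
        _ = δ ^ n * (x * z - z * x) := by rw [mul_sub]
        _ = δ ^ n * (δ * w) := by rw [hw]
        _ = δ ^ (n + 1) * w := by rw [← mul_assoc, ← pow_succ]
  have hLR : (LinearMap.mulLeft (ZMod p) x - LinearMap.mulRight (ZMod p) x) ^ p
      = LinearMap.mulLeft (ZMod p) (x ^ p) - LinearMap.mulRight (ZMod p) (x ^ p) := by
    rw [sub_pow_char_of_commute p (LinearMap.commute_mulLeft_right x x),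
      LinearMap.pow_mulLeft, LinearMap.pow_mulRight]
  obtain ⟨z, hz⟩ := key p y
  rw [hLR, LinearMap.sub_apply, LinearMap.mulLeft_apply, LinearMap.mulRight_apply, hδp,
    zero_mul] at hz
  exact sub_eq_zero.mp hz

theorem pow_p_central_ring (p : ℕ) [Fact p.Prime] (G : Type*) [Group G]
    [Fintype G] (hG : IsPGroup p G) (hG' : Nat.card (commutator G) = p) :
    ∀ x y : MonoidAlgebra (ZMod p) G, x ^ p * y = y * x ^ p := by
  classical
  have hp : p.Prime := Fact.out
  -- Step 1: the commutator subgroup is central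
  have hcenle : commutator G ≤ Subgroup.center G := by
    have hdvd : p ∣ Nat.card (commutator G) := hG' ▸ dvd_refl p
    obtain ⟨b, hbfix, hb1⟩ :=
      (hG.of_equiv ConjAct.toConjAct).exists_fixed_point_of_prime_dvd_card_of_fixed_point
        (commutator G) hdvd (a := 1) (fun g => smul_one g)
    have hbcen : (b : G) ∈ Subgroup.center G := by
      rw [Subgroup.mem_center_iff]
      intro g
      have h1 := hbfix (ConjAct.toConjAct g)
      have h2 : ((ConjAct.toConjAct g • b : commutator G) : G) = b := congrArg _ h1
      rw [ConjAct.Subgroup.val_conj_smul, ConjAct.smul_def, ConjAct.ofConjAct_toConjAct] at h2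
      calc g * (b : G) = (g * (b : G) * g⁻¹) * g := by group
        _ = (b : G) * g := by rw [h2]
    set K := Subgroup.center G ⊓ commutator G with hK
    have hKle : K ≤ commutator G := inf_le_right
    have hKne : K ≠ ⊥ := by
      intro h
      have hbK : (b : G) ∈ K := ⟨hbcen, b.2⟩
      rw [h, Subgroup.mem_bot] at hbK
      exact hb1 (Subtype.ext hbK.symm)
    have hcard : Nat.card K = p := by
      have hdvd' : Nat.card K ∣ p := hG' ▸ Subgroup.card_dvd_of_le hKle
      rcases (hp.eq_one_or_self_of_dvd _ hdvd') with h1 | h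
      · exfalso
        have h2 := (Subgroup.one_lt_card_iff_ne_bot (H := K)).mpr hKne
        omega
      · exact h
    have hfin : K = commutator G :=
      Subgroup.eq_of_le_of_card_ge hKle (by rw [hcard, hG'])
    rw [← hfin]
    exact inf_le_left
  -- Step 2: a generator of the commutator subgroup
  haveI : Fact (Nat.card (commutator G)).Prime := ⟨hG' ▸ hp⟩
  obtain ⟨c, hc⟩ := (isCyclic_of_prime_card hG').exists_generator
  set c₀ : G := (c : G) with hc₀def
  have hc₀ : c₀ ∈ Subgroup.center G := hcenle c.2
  -- basic facts about δ = of c₀ - 1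
  have hofcen : ∀ y : MonoidAlgebra (ZMod p) G,
      of (ZMod p) G c₀ * y = y * of (ZMod p) G c₀ := by
    intro y
    induction y using MonoidAlgebra.induction_on with
    | of g => rw [← map_mul, ← map_mul, Subgroup.mem_center_iff.mp hc₀ g]
    | add f g hf hg => rw [mul_add, add_mul, hf, hg]
    | smul r f hf => rw [mul_smul_comm, smul_mul_assoc, hf]
  have hδc : ∀ y : MonoidAlgebra (ZMod p) G,
      (of (ZMod p) G c₀ - 1) * y = y * (of (ZMod p) G c₀ - 1) := by
    intro y
    rw [sub_mul, mul_sub, one_mul, mul_one, hofcen y]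
  haveI : CharP (MonoidAlgebra (ZMod p) G) p :=
    charP_of_injective_algebraMap' (ZMod p) p
  have hδp : (of (ZMod p) G c₀ - 1) ^ p = 0 := by
    have hc₀p : c₀ ^ p = 1 := by
      have h1 : c ^ Nat.card (commutator G) = 1 := pow_card_eq_one'
      rw [hG'] at h1
      have := congrArg (Subgroup.subtype _) h1
      simpa using this
    rw [sub_pow_char_of_commute p (Commute.one_right _), one_pow, ← map_pow, hc₀p, map_one,
      sub_self]
  -- all ring commutators lie in δ * R
  have hgeom : ∀ n : ℕ, ∃ w, (of (ZMod p) G c₀) ^ n - 1 = (of (ZMod p) G c₀ - 1) * w := by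
    intro n
    refine ⟨∑ i ∈ Finset.range n, (of (ZMod p) G c₀) ^ i, ?_⟩
    rw [← geom_sum_mul, hδc]
  set T : Submodule (ZMod p) (MonoidAlgebra (ZMod p) G) :=
    LinearMap.range (LinearMap.mulLeft (ZMod p) (of (ZMod p) G c₀ - 1)) with hT
  have hmemT : ∀ r, (∃ y, (of (ZMod p) G c₀ - 1) * y = r) → r ∈ T := by
    rintro r ⟨y, hy⟩
    exact ⟨y, hy⟩
  have hsingle : ∀ g h : G, of (ZMod p) G g * of (ZMod p) G h
      - of (ZMod p) G h * of (ZMod p) G g ∈ T := by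
    intro g h
    have hz : ⁅g, h⁆ ∈ commutator G := by
      rw [commutator_def]
      exact Subgroup.commutator_mem_commutator (Subgroup.mem_top g) (Subgroup.mem_top h)
    obtain ⟨n, hn⟩ := mem_powers_iff_mem_zpowers.mpr (hc ⟨⁅g, h⁆, hz⟩)
    have hcoe : ⁅g, h⁆ = c₀ ^ n := by
      have := congrArg (Subgroup.subtype _) hn
      simpa using this.symm
    have hgh : g * h = ⁅g, h⁆ * (h * g) := by group
    obtain ⟨w, hw⟩ := hgeom n
    refine hmemT _ ⟨w * of (ZMod p) G (h * g), ?_⟩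
    calc (of (ZMod p) G c₀ - 1) * (w * of (ZMod p) G (h * g))
        = ((of (ZMod p) G c₀ - 1) * w) * of (ZMod p) G (h * g) := (mul_assoc _ _ _).symm
      _ = ((of (ZMod p) G c₀) ^ n - 1) * of (ZMod p) G (h * g) := by rw [← hw]
      _ = (of (ZMod p) G c₀) ^ n * of (ZMod p) G (h * g) - of (ZMod p) G (h * g) := by
          rw [sub_mul, one_mul]
      _ = of (ZMod p) G g * of (ZMod p) G h - of (ZMod p) G h * of (ZMod p) G g := by
          rw [← map_pow, ← map_mul, ← hcoe, ← hgh, map_mul, map_mul]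
  have hofb : ∀ (g : G) (b : MonoidAlgebra (ZMod p) G),
      of (ZMod p) G g * b - b * of (ZMod p) G g ∈ T := by
    intro g b
    induction b using MonoidAlgebra.induction_on with
    | of h => exact hsingle g h
    | add f1 f2 h1 h2 => convert T.add_mem h1 h2 using 1; noncomm_ring
    | smul r f hf =>
      rw [mul_smul_comm, smul_mul_assoc, ← smul_sub]
      exact T.smul_mem r hf
  have hcommT : ∀ a b : MonoidAlgebra (ZMod p) G, a * b - b * a ∈ T := by
    intro a b
    induction a using MonoidAlgebra.induction_on with
    | of g => exact hofb g b
    | add f1 f2 h1 h2 => convert T.add_mem h1 h2 using 1; noncomm_ring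
    | smul r f hf =>
      rw [smul_mul_assoc, mul_smul_comm, ← smul_sub]
      exact T.smul_mem r hf
  -- conclude
  intro x y
  refine aux_pow_central p _ (of (ZMod p) G c₀ - 1) hδc hδp ?_ x y
  intro a b
  obtain ⟨w, hw⟩ := hcommT a b
  exact ⟨w, hw.symm⟩

/-- For `p > 2` and `G` a finite `p`-group with `|G'| = p`, the `p`-th power of
every normalized unit is central in `𝔽_p G`; in particular
`V(𝔽_p G)^p ⊆ ζ(V(𝔽_p G))`. -/
theorem pow_p_central (p : ℕ) [Fact p.Prime] (hodd : 2 < p) (G : Type*) [Group G]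
    [Fintype G] (hG : IsPGroup p G) (hG' : Nat.card (commutator G) = p) :
    (∀ x ∈ V p G, ∀ y : MonoidAlgebra (ZMod p) G,
        ((x : (MonoidAlgebra (ZMod p) G)ˣ) : MonoidAlgebra (ZMod p) G) ^ p * y =
          y * ((x : (MonoidAlgebra (ZMod p) G)ˣ) : MonoidAlgebra (ZMod p) G) ^ p) ∧
    (∀ x ∈ V p G, ∀ z ∈ V p G, x ^ p * z = z * x ^ p) := by
  have key := pow_p_central_ring p G hG hG'
  constructor
  · intro x _ y
    exact key _ y
  · intro x _ z _
    refine Units.ext ?_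
    rw [Units.val_mul, Units.val_mul, Units.val_pow_eq_pow_val]
    exact key _ _
end

section
/- Let G be a finite p-group with commutator subgroup G' of order p. Then the commutator subgroup of the group of normalized units V(𝔽_p G) has exponent p. -/
open MonoidAlgebra

lemma single_mul_pow_div {k : Type*} [CommRing k] {G : Type*} [Group G] (c : G) (r : k) :
    ∀ (n : ℕ) (h : G), ∃ e : MonoidAlgebra k G,
      MonoidAlgebra.single (h * c ^ n) r
        = e * (MonoidAlgebra.of k G c - 1) + MonoidAlgebra.single h r := by
  intro n
  induction n with
  | zero => exact fun h => ⟨0, by simp⟩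
  | succ n ih =>
    intro h
    obtain ⟨e, he⟩ := ih h
    refine ⟨e * MonoidAlgebra.of k G c + MonoidAlgebra.single h r, ?_⟩
    have key : MonoidAlgebra.single (h * c ^ (n+1)) r
        = MonoidAlgebra.single (h * c ^ n) r * MonoidAlgebra.of k G c := by
      rw [MonoidAlgebra.of_apply, MonoidAlgebra.single_mul_single, mul_one, pow_succ, mul_assoc]
    have key2 : MonoidAlgebra.single h r * MonoidAlgebra.of k G c
        = MonoidAlgebra.single h r * (MonoidAlgebra.of k G c - 1) + MonoidAlgebra.single h r := by
      noncomm_ring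
    rw [key, he, add_mul, key2]
    noncomm_ring

lemma exists_eq_mul_sub_one {k : Type*} [CommRing k] {G H : Type*} [Group G] [Monoid H]
    (f : G →* H) (c : G) (t : H → G) (ht : ∀ g : G, ∃ n : ℕ, g = t (f g) * c ^ n)
    (a : MonoidAlgebra k G) (ha : MonoidAlgebra.mapDomain f a = 0) :
    ∃ b : MonoidAlgebra k G, a = b * (MonoidAlgebra.of k G c - 1) := by
  let T : MonoidAlgebra k G → MonoidAlgebra k G :=
    fun x => MonoidAlgebra.mapDomain (fun g => t (f g)) x
  have hTadd : ∀ x y : MonoidAlgebra k G, T ((x + y : MonoidAlgebra k G)) = T x + T y :=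
    fun x y => MonoidAlgebra.mapDomain_add _ _ _
  have hTsingle : ∀ (g : G) (r : k),
      T (MonoidAlgebra.single g r) = MonoidAlgebra.single (t (f g)) r :=
    fun g r => MonoidAlgebra.mapDomain_single
  have combine : ∀ (s a'' e b X TS Ta : MonoidAlgebra k G),
      s = e * X + TS → a'' = b * X + Ta → s + a'' = (e + b) * X + (TS + Ta) := by
    intro s a'' e b X TS Ta hs ha''
    rw [hs, ha'']; noncomm_ring
  have main : ∀ a : MonoidAlgebra k G, ∃ b : MonoidAlgebra k G,
      a = b * (MonoidAlgebra.of k G c - 1) + T a := by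
    intro a
    induction a using MonoidAlgebra.induction with
    | zero =>
      refine ⟨0, ?_⟩
      have : T 0 = 0 := MonoidAlgebra.mapDomain_zero _
      rw [this]; simp
    | single_add g r a' hg hr ih =>
      obtain ⟨b, hb⟩ := ih
      obtain ⟨n, hn⟩ := ht g
      obtain ⟨e, he⟩ := single_mul_pow_div c r n (t (f g))
      rw [← hn] at he
      refine ⟨e + b, ?_⟩
      rw [hTadd, hTsingle]
      exact combine _ _ _ _ _ _ _ he hb
  obtain ⟨b, hb⟩ := main a
  refine ⟨b, ?_⟩
  have h0 : T a = 0 := by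
    show MonoidAlgebra.ofCoeff (Finsupp.mapDomain (fun g => t (f g)) a.coeff) = 0
    have h1 := Finsupp.mapDomain_comp (v := a.coeff) (f := ⇑f) (g := t)
    rw [Function.comp_def] at h1
    rw [h1, MonoidAlgebra.ofCoeff_eq_zero.mp ha, Finsupp.mapDomain_zero, MonoidAlgebra.ofCoeff_zero]
  rw [hb, h0, add_zero]

/-- If `G` is a finite `p`-group with `|G'| = p`, then the commutator subgroup of the
group of normalized units `V(𝔽_p G)` has exponent `p`. -/
theorem exponent_commutator_V (p : ℕ) [Fact p.Prime] (G : Type*) [Group G]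
    [Fintype G] (hG : IsPGroup p G) (hG' : Nat.card (commutator G) = p) :
    Monoid.exponent (commutator ↥(V p G)) = p := by
  have hp : p.Prime := Fact.out
  haveI : Fact (1 < p) := ⟨hp.one_lt⟩
  -- the generator c of the commutator subgroup
  set N := commutator G with hN
  haveI : IsCyclic ↥N := isCyclic_of_prime_card hG'
  obtain ⟨cN, hcN⟩ := IsCyclic.exists_generator (α := ↥N)
  set c : G := (cN : G) with hc
  have hcmem : c ∈ N := cN.2
  -- c ^ p = 1
  have hcp : c ^ p = 1 := by
    have h1 : cN ^ p = 1 := by rw [← hG']; exact pow_card_eq_one'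
    have := congrArg (Subtype.val) h1
    simpa using this
  -- every element of N is a power of c
  have hmemN : ∀ x ∈ N, ∃ n : ℕ, x = c ^ n := by
    intro x hx
    have h1 : (⟨x, hx⟩ : ↥N) ∈ Subgroup.zpowers cN := hcN _
    rw [← mem_powers_iff_mem_zpowers] at h1
    obtain ⟨n, hn⟩ := h1
    refine ⟨n, ?_⟩
    have := congrArg (Subtype.val) hn
    simpa using this.symm
  -- c is central
  have hcent : ∀ g : G, g * c = c * g := by
    intro g
    have hconj : MulAut.conjNormal (G := G) g = (1 : MulAut ↥N) := by
      haveI : Finite (MulAut ↥N) :=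
        Finite.of_injective (fun e => (e : ↥N → ↥N)) (fun e1 e2 h => by
          ext x; exact congrArg Subtype.val (congrFun h x))
      have h1 : orderOf (MulAut.conjNormal (G := G) g : MulAut ↥N) ∣ orderOf g :=
        orderOf_map_dvd _ g
      obtain ⟨k, hk⟩ := hG g
      have h2 : orderOf g ∣ p ^ k := orderOf_dvd_of_pow_eq_one hk
      have h3 : orderOf (MulAut.conjNormal (G := G) g : MulAut ↥N) ∣ Nat.card (MulAut ↥N) :=
        orderOf_dvd_natCard _
      have h4 : Nat.card (MulAut ↥N) = p - 1 := by
        rw [IsCyclic.card_mulAut, hG', Nat.totient_prime hp]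
      have h5 : Nat.Coprime (p ^ k) (p - 1) := by
        apply Nat.Coprime.pow_left
        have hple : 2 ≤ p := hp.two_le
        have : ¬ p ∣ (p - 1) := by
          intro hdvd
          have := Nat.le_of_dvd (by omega) hdvd
          omega
        exact (Nat.Prime.coprime_iff_not_dvd hp).mpr this
      have h6 : orderOf (MulAut.conjNormal (G := G) g : MulAut ↥N) = 1 := by
        rw [h4] at h3
        exact (Nat.Coprime.coprime_dvd_left (h1.trans h2) h5).eq_one_of_dvd h3
      exact orderOf_eq_one_iff.mp h6
    have := congrArg (fun φ : MulAut ↥N => ((φ ⟨c, hcmem⟩ : ↥N) : G)) hconj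
    simp only [MulAut.conjNormal_apply, MulAut.one_apply] at this
    -- this : g * c * g⁻¹ = c
    calc g * c = (g * c * g⁻¹) * g := by group
    _ = c * g := by rw [this]
  -- `of c` is central in the monoid algebra
  have hA_comm : ∀ a : MonoidAlgebra (ZMod p) G,
      Commute (MonoidAlgebra.of (ZMod p) G c) a := by
    intro a
    have hcc : ∀ y : G, c⁻¹ * y = y * c⁻¹ := by
      intro y
      calc c⁻¹ * y = c⁻¹ * (y * c) * c⁻¹ := by group
      _ = c⁻¹ * (c * y) * c⁻¹ := by rw [hcent y]
      _ = y * c⁻¹ := by group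
    show MonoidAlgebra.of (ZMod p) G c * a = a * MonoidAlgebra.of (ZMod p) G c
    ext y
    rw [MonoidAlgebra.of_apply]
    rw [MonoidAlgebra.single_mul_apply, MonoidAlgebra.mul_single_apply]
    rw [one_mul, mul_one, hcc]
  -- the map to the abelianization algebra
  let π : MonoidAlgebra (ZMod p) G →+* MonoidAlgebra (ZMod p) (Abelianization G) :=
    MonoidAlgebra.mapDomainRingHom (ZMod p) (Abelianization.of (G := G))
  let φ : ↥(V p G) →* (MonoidAlgebra (ZMod p) (Abelianization G))ˣ :=
    (Units.map π.toMonoidHom).comp (V p G).subtype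
  have hker : commutator ↥(V p G) ≤ φ.ker := Abelianization.commutator_subset_ker φ
  -- section of the abelianization map
  let t : Abelianization G → G := fun q => Quotient.out q
  have htf : ∀ g : G, Abelianization.of (t (Abelianization.of g)) = Abelianization.of g := by
    intro g
    exact QuotientGroup.out_eq' (s := commutator G) (Abelianization.of g)
  have ht : ∀ g : G, ∃ n : ℕ, g = t (Abelianization.of g) * c ^ n := by
    intro g
    have h1 : Abelianization.of ((t (Abelianization.of g))⁻¹ * g) = 1 := by
      rw [map_mul, map_inv, htf]
      group
    have h2 : (t (Abelianization.of g))⁻¹ * g ∈ N := by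
      have : (QuotientGroup.mk ((t (Abelianization.of g))⁻¹ * g) : G ⧸ commutator G) = 1 := h1
      exact (QuotientGroup.eq_one_iff _).mp this
    obtain ⟨n, hn⟩ := hmemN _ h2
    exact ⟨n, by rw [← hn]; group⟩
  -- characteristic p
  haveI : CharP (MonoidAlgebra (ZMod p) G) p := by
    refine charP_of_injective_algebraMap (R := ZMod p) ?_ p
    intro x y hxy
    rw [show ⇑(algebraMap (ZMod p) (MonoidAlgebra (ZMod p) G)) = fun r =>
      MonoidAlgebra.single 1 r from rfl] at hxy
    exact MonoidAlgebra.single_right_injective hxy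
  haveI : ExpChar (MonoidAlgebra (ZMod p) G) p := ExpChar.prime hp
  -- every element of the commutator subgroup of V has p-th power 1
  have hpow : ∀ x : ↥(commutator ↥(V p G)), x ^ p = 1 := by
    intro x
    set v : ↥(V p G) := (x : ↥(V p G)) with hv
    have hφv : φ v = 1 := hker x.2
    set u : (MonoidAlgebra (ZMod p) G)ˣ := (v : (MonoidAlgebra (ZMod p) G)ˣ) with hu
    set a : MonoidAlgebra (ZMod p) G := (u : MonoidAlgebra (ZMod p) G) with ha
    have hπa : π a = 1 := by
      have := congrArg (Units.val) hφv
      exact this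
    have hker0 : MonoidAlgebra.mapDomain (Abelianization.of (G := G)) (a - 1) = 0 := by
      have h1 : MonoidAlgebra.mapDomain (⇑(Abelianization.of (G := G))) (a - 1) = π (a - 1) := rfl
      rw [h1, map_sub, hπa, map_one, sub_self]
    obtain ⟨b, hb⟩ := exists_eq_mul_sub_one (Abelianization.of (G := G)) c t ht (a - 1) hker0
    have hX : (MonoidAlgebra.of (ZMod p) G c - 1) ^ p = 0 := by
      rw [sub_pow_char_of_commute p (Commute.one_right (MonoidAlgebra.of (ZMod p) G c)), one_pow, ← map_pow, hcp,
        map_one, sub_self]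
    have hap : a ^ p = 1 := by
      have h1 : a = 1 + (a - 1) := by abel
      calc a ^ p = (1 + (a - 1)) ^ p := by rw [← h1]
      _ = 1 ^ p + (a - 1) ^ p := add_pow_char_of_commute p (Commute.one_left (a - 1))
      _ = 1 + b ^ p * (MonoidAlgebra.of (ZMod p) G c - 1) ^ p := by
          rw [one_pow, hb, Commute.mul_pow]
          exact ((hA_comm b).symm.sub_right (Commute.one_right b))
      _ = 1 := by rw [hX, mul_zero, add_zero]
    have hup : u ^ p = 1 := by
      apply Units.ext
      rw [Units.val_pow_eq_pow_val, Units.val_one]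
      exact hap
    have hvp : v ^ p = 1 := by
      apply Subtype.ext
      rw [SubmonoidClass.coe_pow]
      exact hup
    apply Subtype.ext
    rw [SubmonoidClass.coe_pow]
    exact hvp
  have hdvd : Monoid.exponent ↥(commutator ↥(V p G)) ∣ p :=
    Monoid.exponent_dvd_of_forall_pow_eq_one hpow
  -- a nontrivial element of the commutator subgroup of V
  have haug : ∀ g : G, aug p G (MonoidAlgebra.of (ZMod p) G g) = 1 := by
    intro g
    rw [aug, MonoidAlgebra.lift_of]
    rfl
  let υ0 : G →* (MonoidAlgebra (ZMod p) G)ˣ :=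
    (Units.map (MonoidAlgebra.of (ZMod p) G : G →* MonoidAlgebra (ZMod p) G)).comp
      (toUnits (G := G)).toMonoidHom
  have hυ0val : ∀ g : G, (υ0 g : MonoidAlgebra (ZMod p) G) = MonoidAlgebra.of (ZMod p) G g := by
    intro g; rfl
  have hυ0mem : ∀ g : G, υ0 g ∈ V p G := by
    intro g
    show Units.map _ (υ0 g) = 1
    apply Units.ext
    show aug p G ((υ0 g : MonoidAlgebra (ZMod p) G)) = 1
    rw [hυ0val, haug]
  let υ : G →* ↥(V p G) := υ0.codRestrict (V p G) hυ0mem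
  have hNnebot : N ≠ ⊥ := by
    intro h
    have h2 : Nat.card ↥(⊥ : Subgroup G) = p := h ▸ hG'
    rw [Subgroup.card_bot] at h2
    have := hp.two_le
    omega
  obtain ⟨z, hz, hz1⟩ : ∃ z ∈ N, z ≠ 1 := by
    rcases N.bot_or_exists_ne_one with h | h
    · exact absurd h hNnebot
    · obtain ⟨z, hz, hz1⟩ := h; exact ⟨z, hz, hz1⟩
  have hmem2 : υ z ∈ commutator ↥(V p G) := by
    have h1 : υ z ∈ Subgroup.map υ (commutator G) := Subgroup.mem_map_of_mem υ hz
    rw [commutator_def, Subgroup.map_commutator] at h1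
    exact Subgroup.commutator_mono le_top le_top h1
  haveI : Nontrivial (ZMod p) := ZMod.nontrivial p
  have hx0 : (⟨υ z, hmem2⟩ : ↥(commutator ↥(V p G))) ≠ 1 := by
    intro h
    have h1 : υ z = 1 := congrArg Subtype.val h
    have h2 : (υ0 z : MonoidAlgebra (ZMod p) G) = 1 := by
      have := congrArg (fun w : ↥(V p G) => ((w : (MonoidAlgebra (ZMod p) G)ˣ) :
        MonoidAlgebra (ZMod p) G)) h1
      exact this
    rw [hυ0val] at h2
    have h3 : MonoidAlgebra.of (ZMod p) G z = MonoidAlgebra.of (ZMod p) G 1 := by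
      rw [h2, map_one]
    exact hz1 (MonoidAlgebra.of_injective h3)
  rcases (Nat.Prime.eq_one_or_self_of_dvd hp _ hdvd) with h | h
  · exfalso
    apply hx0
    have := Monoid.pow_exponent_eq_one (⟨υ z, hmem2⟩ : ↥(commutator ↥(V p G)))
    rwa [h, pow_one] at this
  · exact h
end

section
/- Let G be a finite nonabelian p-group with commutator subgroup of order p, p > 2, and let C_{g_1},…,C_{g_t} be the conjugacy classes of G of size at least 2. Then ζ(V(𝔽_p G)) = V(𝔽_p ζ(G)) × N, where N = ∏_{i=1}^t ⟨1 + Ĉ_{g_i}⟩ is an elementary abelian p-subgroup of V(𝔽_p G). -/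
open MonoidAlgebra

/-- `V(𝔽_p ζ(G))` viewed inside the unit group: the normalized units supported on the
center of `G`. -/
noncomputable def Vcenter (p : ℕ) [Fact p.Prime] (G : Type*) [Group G] [Fintype G] :
    Subgroup (MonoidAlgebra (ZMod p) G)ˣ :=
  Subgroup.closure {u | u ∈ V p G ∧
    ∀ g ∈ ((u : (MonoidAlgebra (ZMod p) G)ˣ) : MonoidAlgebra (ZMod p) G).coeff.support,
      g ∈ Subgroup.center G}

/-- The subgroup `N = ∏ ⟨1 + Ĉ_{g_i}⟩` generated by `1 + Ĉ_g` for the conjugacy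
classes with at least two elements (i.e. `g` noncentral). -/
noncomputable def Nsub (p : ℕ) [Fact p.Prime] (G : Type*) [Group G] [Fintype G]
    [DecidableEq G] : Subgroup (MonoidAlgebra (ZMod p) G)ˣ :=
  Subgroup.closure {u | ∃ g : G, g ∉ Subgroup.center G ∧
    ((u : (MonoidAlgebra (ZMod p) G)ˣ) : MonoidAlgebra (ZMod p) G) = 1 + classSum p G g}

set_option linter.unusedSectionVars false

namespace CVaux

open scoped commutatorElement

variable (p : ℕ) [Fact p.Prime] (G : Type*) [Group G] [Fintype G] [DecidableEq G]

noncomputable local instance : Fintype ↥(commutator G) := Fintype.ofFinite _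

theorem aug_of (g : G) : aug p G (of (ZMod p) G g) = 1 := by
  simp [aug]

variable {p G}

theorem mem_V_iff {u : (MonoidAlgebra (ZMod p) G)ˣ} :
    u ∈ V p G ↔ aug p G (u : MonoidAlgebra (ZMod p) G) = 1 := by
  simp [V, MonoidHom.mem_ker, Units.ext_iff]

theorem comm_of_all {x : MonoidAlgebra (ZMod p) G}
    (h : ∀ g : G, of (ZMod p) G g * x = x * of (ZMod p) G g) (a : MonoidAlgebra (ZMod p) G) :
    a * x = x * a := by
  induction a using MonoidAlgebra.induction_on with
  | of g => exact h g
  | add f g hf hg => rw [add_mul, mul_add, hf, hg]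
  | smul r f hf => rw [smul_mul_assoc, mul_smul_comm, hf]

theorem central_of_supp_center {x : MonoidAlgebra (ZMod p) G}
    (h : ∀ g ∈ x.coeff.support, g ∈ Subgroup.center G) (a : MonoidAlgebra (ZMod p) G) :
    a * x = x * a := by
  refine comm_of_all (fun g => ?_) a
  show MonoidAlgebra.single g 1 * x = x * MonoidAlgebra.single g 1
  ext y
  rw [MonoidAlgebra.single_mul_apply, MonoidAlgebra.mul_single_apply, one_mul, mul_one]
  by_cases h1 : g⁻¹ * y ∈ x.coeff.support
  · have hz := Subgroup.mem_center_iff.mp (h _ h1)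
    have : y * g⁻¹ = g⁻¹ * y := by
      have := hz g
      calc y * g⁻¹ = g * (g⁻¹ * y) * g⁻¹ := by group
        _ = (g⁻¹ * y) * g * g⁻¹ := by rw [this]
        _ = g⁻¹ * y := by group
    rw [this]
  · by_cases h2 : y * g⁻¹ ∈ x.coeff.support
    · have hz := Subgroup.mem_center_iff.mp (h _ h2)
      have : g⁻¹ * y = y * g⁻¹ := by
        calc g⁻¹ * y = g⁻¹ * (y * g⁻¹ * g) := by group
          _ = g⁻¹ * (g * (y * g⁻¹)) := by rw [← hz g]
          _ = y * g⁻¹ := by group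
      rw [this]
    · rw [Finsupp.notMem_support_iff.mp h1, Finsupp.notMem_support_iff.mp h2]

theorem subgroup_eq_of_prime {S K : Subgroup G} (hK : Nat.card K = p) (hle : S ≤ K)
    (hne : S ≠ ⊥) : S = K := by
  have h1 : Nat.card S ∣ p := hK ▸ Subgroup.card_dvd_of_le hle
  have hp : p.Prime := Fact.out
  rcases (hp.eq_one_or_self_of_dvd _ h1) with h | h
  · exact absurd (Subgroup.card_eq_one.mp h) hne
  · exact Subgroup.eq_of_le_of_card_ge hle (le_of_eq (hK.trans h.symm))

theorem commutator_le_center (hG : IsPGroup p G) (hG' : Nat.card (commutator G) = p) :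
    ∀ c ∈ commutator G, c ∈ Subgroup.center G := by
  have hconj : IsPGroup p (ConjAct G) := hG.of_equiv ConjAct.toConjAct
  have hdvd : p ∣ Nat.card (commutator G) := hG' ▸ dvd_rfl
  have h1 : (1 : (commutator G)) ∈ MulAction.fixedPoints (ConjAct G) (commutator G) := by
    rw [MulAction.mem_fixedPoints]
    intro g
    apply Subtype.ext
    rw [ConjAct.Subgroup.val_conj_smul]
    simp
  obtain ⟨b, hbfix, hb1⟩ :=
    hconj.exists_fixed_point_of_prime_dvd_card_of_fixed_point
      (α := ↥(commutator G)) hdvd h1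
  rw [MulAction.mem_fixedPoints] at hbfix
  have hbZ : (b : G) ∈ Subgroup.center G := by
    rw [Subgroup.mem_center_iff]
    intro g
    have h2 := hbfix (ConjAct.toConjAct g)
    have h3 : g * (b : G) * g⁻¹ = b := by
      have := congrArg (Subtype.val) h2
      rwa [ConjAct.Subgroup.val_conj_smul, ConjAct.smul_def, ConjAct.ofConjAct_toConjAct] at this
    calc g * (b : G) = g * (b : G) * g⁻¹ * g := by group
      _ = (b : G) * g := by rw [h3]
  have hSne : commutator G ⊓ Subgroup.center G ≠ ⊥ := by
    intro hbot
    have hmem : (b : G) ∈ (⊥ : Subgroup G) := hbot ▸ (Subgroup.mem_inf.mpr ⟨b.2, hbZ⟩)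
    have : b = (1 : ↥(commutator G)) := by
      apply Subtype.ext
      simpa using Subgroup.mem_bot.mp hmem
    exact hb1 this.symm
  have heq : commutator G ⊓ Subgroup.center G = commutator G :=
    subgroup_eq_of_prime hG' inf_le_left hSne
  intro c hc
  have : c ∈ commutator G ⊓ Subgroup.center G := heq.symm ▸ hc
  exact this.2

theorem exists_commutator_eq (hKZ : ∀ c ∈ commutator G, c ∈ Subgroup.center G)
    (hG' : Nat.card (commutator G) = p) {g : G} (hg : g ∉ Subgroup.center G) :
    ∀ c ∈ commutator G, ∃ x : G, g⁻¹ * x * g * x⁻¹ = c := by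
  have hcomm_mem : ∀ x : G, g⁻¹ * x * g * x⁻¹ ∈ commutator G := by
    intro x
    have h0 : g⁻¹ * x * g * x⁻¹ = ⁅g⁻¹, x⁆ := by
      rw [commutatorElement_def, inv_inv]
    rw [h0, commutator_def]
    exact Subgroup.commutator_mem_commutator (Subgroup.mem_top _) (Subgroup.mem_top _)
  have hmul : ∀ x y : G, g⁻¹ * (x * y) * g * (x * y)⁻¹ =
      (g⁻¹ * x * g * x⁻¹) * (g⁻¹ * y * g * y⁻¹) := by
    intro x y
    have hc := Subgroup.mem_center_iff.mp (hKZ _ (hcomm_mem y))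
    calc g⁻¹ * (x * y) * g * (x * y)⁻¹
        = g⁻¹ * x * g * ((g⁻¹ * y * g * y⁻¹) * x⁻¹) := by group
      _ = g⁻¹ * x * g * (x⁻¹ * (g⁻¹ * y * g * y⁻¹)) := by rw [← hc x⁻¹]
      _ = (g⁻¹ * x * g * x⁻¹) * (g⁻¹ * y * g * y⁻¹) := by group
  let φ : G →* G :=
    { toFun := fun x => g⁻¹ * x * g * x⁻¹
      map_one' := by group
      map_mul' := hmul }
  have hrange_le : φ.range ≤ commutator G := by
    rintro _ ⟨x, rfl⟩
    exact hcomm_mem x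
  have hne : φ.range ≠ ⊥ := by
    obtain ⟨x, hx⟩ : ∃ x, ¬ (x * g = g * x) := by
      by_contra hall
      push_neg at hall
      exact hg (Subgroup.mem_center_iff.mpr hall)
    intro hbot
    have hφx : φ x = 1 := Subgroup.mem_bot.mp (hbot ▸ MonoidHom.mem_range.mpr ⟨x, rfl⟩)
    have h1 : g⁻¹ * x * g * x⁻¹ = 1 := hφx
    have : x * g = g * x := by
      calc x * g = g * (g⁻¹ * x * g * x⁻¹) * x := by group
        _ = g * 1 * x := by rw [h1]
        _ = g * x := by group
    exact hx this
  have hrange : φ.range = commutator G := subgroup_eq_of_prime hG' hrange_le hne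
  intro c hc
  rw [← hrange] at hc
  obtain ⟨x, hx⟩ := hc
  exact ⟨x, hx⟩


variable (p G)

noncomputable def sg : MonoidAlgebra (ZMod p) G :=
  ∑ c : ↥(commutator G), of (ZMod p) G (c : G)

variable {p G}

theorem of_mul_sg (h : G) :
    of (ZMod p) G h * sg p G = ∑ c : ↥(commutator G), of (ZMod p) G (h * (c : G)) := by
  rw [sg, Finset.mul_sum]
  exact Finset.sum_congr rfl fun c _ => by rw [← map_mul]

theorem sg_mul_of (h : G) :
    sg p G * of (ZMod p) G h = ∑ c : ↥(commutator G), of (ZMod p) G ((c : G) * h) := by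
  rw [sg, Finset.sum_mul]
  exact Finset.sum_congr rfl fun c _ => by rw [← map_mul]

theorem supp_sg (hKZ : ∀ c ∈ commutator G, c ∈ Subgroup.center G) :
    ∀ x ∈ (sg p G).coeff.support, x ∈ Subgroup.center G := by
  intro x hx
  rw [sg, MonoidAlgebra.coeff_sum] at hx
  obtain ⟨c, _, hc⟩ := Finsupp.mem_support_finset_sum x hx
  rw [MonoidAlgebra.of_apply, MonoidAlgebra.coeff_single] at hc
  have := Finsupp.support_single_subset hc
  rw [Finset.mem_singleton] at this
  rw [this]
  exact hKZ _ c.2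

theorem sg_comm (hKZ : ∀ c ∈ commutator G, c ∈ Subgroup.center G)
    (a : MonoidAlgebra (ZMod p) G) : a * sg p G = sg p G * a :=
  central_of_supp_center (supp_sg hKZ) a

theorem of_K_mul_sg {c : G} (hc : c ∈ commutator G) :
    of (ZMod p) G c * sg p G = sg p G := by
  rw [of_mul_sg]
  conv_rhs => rw [sg]
  exact Fintype.sum_equiv (Equiv.mulLeft (⟨c, hc⟩ : ↥(commutator G)))
    (fun d => of (ZMod p) G (c * (d : G))) (fun d => of (ZMod p) G (d : G)) (fun d => rfl)

theorem sg_mul (a : MonoidAlgebra (ZMod p) G) :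
    sg p G * a = ∑ c : ↥(commutator G), of (ZMod p) G (c : G) * a := by
  rw [sg, Finset.sum_mul]

theorem sg_sq (hG' : Nat.card (commutator G) = p) : sg p G * sg p G = 0 := by
  rw [sg_mul]
  rw [Finset.sum_congr rfl (fun (c : ↥(commutator G)) _ => of_K_mul_sg c.2)]
  rw [Finset.sum_const, Finset.card_univ]
  have hcard : Fintype.card ↥(commutator G) = p := by rw [← Nat.card_eq_fintype_card, hG']
  rw [hcard, ← Nat.cast_smul_eq_nsmul (ZMod p), ZMod.natCast_self, zero_smul]

theorem aug_sg (hG' : Nat.card (commutator G) = p) : aug p G (sg p G) = 0 := by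
  rw [sg, map_sum]
  have : ∀ c : ↥(commutator G), aug p G (of (ZMod p) G (c : G)) = 1 := fun c => aug_of p G _
  rw [Finset.sum_congr rfl (fun c _ => this c), Finset.sum_const, Finset.card_univ]
  have hcard : Fintype.card ↥(commutator G) = p := by rw [← Nat.card_eq_fintype_card, hG']
  rw [hcard, nsmul_eq_mul, mul_one, ZMod.natCast_self]

theorem classSum_eq (hKZ : ∀ c ∈ commutator G, c ∈ Subgroup.center G)
    (hG' : Nat.card (commutator G) = p) {g : G} (hg : g ∉ Subgroup.center G) :
    classSum p G g = of (ZMod p) G g * sg p G := by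
  rw [classSum, of_mul_sg]
  refine Finset.sum_bij (fun h hh => (⟨g⁻¹ * h, ?_⟩ : ↥(commutator G))) ?_ ?_ ?_ ?_
  · rw [Finset.mem_filter] at hh
    obtain ⟨u, hu⟩ := isConj_iff.mp hh.2
    have : g⁻¹ * h = g⁻¹ * u * g * u⁻¹ := by rw [← hu]; group
    rw [this]
    have h0 : g⁻¹ * u * g * u⁻¹ = ⁅g⁻¹, u⁆ := by rw [commutatorElement_def, inv_inv]
    rw [h0, commutator_def]
    exact Subgroup.commutator_mem_commutator (Subgroup.mem_top _) (Subgroup.mem_top _)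
  · intro a ha
    exact Finset.mem_univ _
  · intro a₁ ha₁ a₂ ha₂ h12
    rw [Subtype.mk.injEq] at h12
    exact mul_left_cancel h12
  · intro c _
    obtain ⟨x, hx⟩ := exists_commutator_eq hKZ hG' hg (c : G) c.2
    refine ⟨g * (c : G), ?_, ?_⟩
    · rw [Finset.mem_filter]
      refine ⟨Finset.mem_univ _, isConj_iff.mpr ⟨x, ?_⟩⟩
      rw [← hx]
      group
    · apply Subtype.ext
      show g⁻¹ * (g * (c : G)) = (c : G)
      group
  · intro h hh
    have : g * (g⁻¹ * h) = h := by group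
    rw [this]

theorem classSum_apply (g x : G) :
    (classSum p G g).coeff x = if IsConj g x then 1 else 0 := by
  rw [classSum]
  rw [MonoidAlgebra.coeff_sum, Finsupp.finset_sum_apply]
  simp only [MonoidAlgebra.of_apply]
  have : ∀ h : G, (MonoidAlgebra.single h (1 : ZMod p)).coeff x = if h = x then 1 else 0 :=
    fun h => Finsupp.single_apply
  rw [Finset.sum_congr rfl (fun h _ => this h), Finset.sum_ite_eq']
  simp [Finset.mem_filter]


theorem classSum_comm (hKZ : ∀ c ∈ commutator G, c ∈ Subgroup.center G) (g : G)
    (a : MonoidAlgebra (ZMod p) G) :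
    a * (of (ZMod p) G g * sg p G) = (of (ZMod p) G g * sg p G) * a := by
  refine comm_of_all (fun h => ?_) a
  have hmem : h⁻¹ * g⁻¹ * h * g ∈ commutator G := by
    have h0 : h⁻¹ * g⁻¹ * h * g = ⁅h⁻¹, g⁻¹⁆ := by
      rw [commutatorElement_def, inv_inv, inv_inv]
    rw [h0, commutator_def]
    exact Subgroup.commutator_mem_commutator (Subgroup.mem_top _) (Subgroup.mem_top _)
  have key : h * g = g * h * (h⁻¹ * g⁻¹ * h * g) := by group
  calc of (ZMod p) G h * (of (ZMod p) G g * sg p G)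
      = of (ZMod p) G (h * g) * sg p G := by rw [← mul_assoc, ← map_mul]
    _ = of (ZMod p) G (g * h) * (of (ZMod p) G (h⁻¹ * g⁻¹ * h * g) * sg p G) := by
        rw [key, map_mul, mul_assoc]
    _ = of (ZMod p) G (g * h) * sg p G := by rw [of_K_mul_sg hmem]
    _ = (of (ZMod p) G g * sg p G) * of (ZMod p) G h := by
        rw [map_mul, mul_assoc, sg_comm hKZ (of (ZMod p) G h), ← mul_assoc]

variable (p G)

noncomputable def W : Submodule (ZMod p) (MonoidAlgebra (ZMod p) G) :=
  Submodule.span (ZMod p) {x | ∃ g, g ∉ Subgroup.center G ∧ x = classSum p G g}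

variable {p G}

theorem not_isConj_of_center {g x : G} (hg : g ∉ Subgroup.center G)
    (hx : x ∈ Subgroup.center G) : ¬ IsConj g x := by
  intro h
  obtain ⟨u, hu⟩ := isConj_iff.mp h
  apply hg
  have h1 : g = u⁻¹ * x * u := by rw [← hu]; group
  have hc := Subgroup.mem_center_iff.mp hx
  have h2 : u⁻¹ * x * u = x := by rw [hc u⁻¹]; group
  rw [h1, h2]
  exact hx

theorem W_apply_center {t : MonoidAlgebra (ZMod p) G} (ht : t ∈ W p G) {x : G}
    (hx : x ∈ Subgroup.center G) : t.coeff x = 0 := by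
  induction ht using Submodule.span_induction with
  | mem y hy =>
    obtain ⟨g, hg, rfl⟩ := hy
    rw [classSum_apply, if_neg (not_isConj_of_center hg hx)]
  | zero => rfl
  | add y z hy hz hy' hz' => rw [MonoidAlgebra.coeff_add, Finsupp.add_apply, hy', hz', add_zero]
  | smul c y hy hy' => rw [MonoidAlgebra.coeff_smul_apply, hy', smul_zero]

theorem W_aug (hKZ : ∀ c ∈ commutator G, c ∈ Subgroup.center G)
    (hG' : Nat.card (commutator G) = p) {t : MonoidAlgebra (ZMod p) G} (ht : t ∈ W p G) :
    aug p G t = 0 := by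
  induction ht using Submodule.span_induction with
  | mem y hy =>
    obtain ⟨g, hg, rfl⟩ := hy
    rw [classSum_eq hKZ hG' hg, map_mul, aug_sg hG', mul_zero]
  | zero => exact map_zero _
  | add y z hy hz hy' hz' => rw [map_add, hy', hz', add_zero]
  | smul c y hy hy' => rw [map_smul, hy', smul_zero]

theorem sg_mul_W (hKZ : ∀ c ∈ commutator G, c ∈ Subgroup.center G)
    (hG' : Nat.card (commutator G) = p) {t : MonoidAlgebra (ZMod p) G} (ht : t ∈ W p G) :
    sg p G * t = 0 := by
  induction ht using Submodule.span_induction with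
  | mem y hy =>
    obtain ⟨g, hg, rfl⟩ := hy
    rw [classSum_eq hKZ hG' hg, ← mul_assoc, ← sg_comm hKZ, mul_assoc, sg_sq hG', mul_zero]
  | zero => exact mul_zero _
  | add y z hy hz hy' hz' => rw [mul_add, hy', hz', add_zero]
  | smul c y hy hy' => rw [mul_smul_comm, hy', smul_zero]

theorem W_mul_W (hKZ : ∀ c ∈ commutator G, c ∈ Subgroup.center G)
    (hG' : Nat.card (commutator G) = p) {s t : MonoidAlgebra (ZMod p) G}
    (hs : s ∈ W p G) (ht : t ∈ W p G) : s * t = 0 := by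
  induction hs using Submodule.span_induction with
  | mem y hy =>
    obtain ⟨g, hg, rfl⟩ := hy
    rw [classSum_eq hKZ hG' hg, mul_assoc, sg_mul_W hKZ hG' ht, mul_zero]
  | zero => exact zero_mul _
  | add y z hy hz hy' hz' => rw [add_mul, hy', hz', add_zero]
  | smul c y hy hy' => rw [smul_mul_assoc, hy', smul_zero]

theorem single_mul_W (hKZ : ∀ c ∈ commutator G, c ∈ Subgroup.center G)
    (hG' : Nat.card (commutator G) = p) {h : G} (hh : h ∈ Subgroup.center G) (c : ZMod p)
    {t : MonoidAlgebra (ZMod p) G} (ht : t ∈ W p G) :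
    MonoidAlgebra.single h c * t ∈ W p G := by
  induction ht using Submodule.span_induction with
  | mem y hy =>
    obtain ⟨g, hg, rfl⟩ := hy
    rw [classSum_eq hKZ hG' hg]
    have h1 : MonoidAlgebra.single h c = c • of (ZMod p) G h := by
      rw [MonoidAlgebra.of_apply, MonoidAlgebra.smul_single', mul_one]
    rw [h1, smul_mul_assoc, ← mul_assoc, ← map_mul]
    apply Submodule.smul_mem
    have hhg : h * g ∉ Subgroup.center G := by
      intro hmem
      apply hg
      have h2 : g = h⁻¹ * (h * g) := by group
      rw [h2]
      exact Subgroup.mul_mem _ (Subgroup.inv_mem _ hh) hmem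
    rw [← classSum_eq hKZ hG' hhg]
    exact Submodule.subset_span ⟨h * g, hhg, rfl⟩
  | zero => rw [mul_zero]; exact Submodule.zero_mem _
  | add y z hy hz hy' hz' => rw [mul_add]; exact Submodule.add_mem _ hy' hz'
  | smul a y hy hy' => rw [mul_smul_comm]; exact Submodule.smul_mem _ _ hy'

theorem central_mul_W (hKZ : ∀ c ∈ commutator G, c ∈ Subgroup.center G)
    (hG' : Nat.card (commutator G) = p) {b t : MonoidAlgebra (ZMod p) G}
    (hb : ∀ g ∈ b.coeff.support, g ∈ Subgroup.center G) (ht : t ∈ W p G) : b * t ∈ W p G := by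
  have hb' : b * t = ∑ h ∈ b.coeff.support, MonoidAlgebra.single h (b.coeff h) * t := by
    conv_lhs => rw [← MonoidAlgebra.sum_coeff_single b]
    show (∑ h ∈ b.coeff.support, MonoidAlgebra.single h (b.coeff h)) * t = _
    rw [Finset.sum_mul]
  rw [hb']
  exact Submodule.sum_mem _ (fun h hh => single_mul_W hKZ hG' (hb h hh) _ ht)

theorem classfun_mem_W (hKZ : ∀ c ∈ commutator G, c ∈ Subgroup.center G)
    (hG' : Nat.card (commutator G) = p) :
    ∀ (n : ℕ) (y : MonoidAlgebra (ZMod p) G), y.coeff.support.card = n →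
      (∀ x h : G, y.coeff (x * h * x⁻¹) = y.coeff h) →
      (∀ h ∈ y.coeff.support, h ∉ Subgroup.center G) → y ∈ W p G := by
  intro n
  induction n using Nat.strong_induction_on with
  | _ n ih =>
    intro y hcard hcf hsupp
    rcases Finset.eq_empty_or_nonempty y.coeff.support with he | ⟨g, hg⟩
    · have h0 : y = 0 := MonoidAlgebra.coeff_eq_zero.mp (Finsupp.support_eq_empty.mp he)
      rw [h0]; exact Submodule.zero_mem _
    · have hgZ : g ∉ Subgroup.center G := hsupp g hg
      have hconst : ∀ x, IsConj g x → y.coeff x = y.coeff g := by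
        intro x hx
        obtain ⟨u, hu⟩ := isConj_iff.mp hx
        rw [← hu]; exact hcf u g
      set y' := y - y.coeff g • classSum p G g with hy'
      have happ : ∀ x, y'.coeff x = if IsConj g x then 0 else y.coeff x := by
        intro x
        rw [hy', MonoidAlgebra.coeff_sub, Finsupp.sub_apply, MonoidAlgebra.coeff_smul, Finsupp.smul_apply, classSum_apply]
        by_cases hx : IsConj g x
        · rw [if_pos hx, if_pos hx, hconst x hx, smul_eq_mul, mul_one, sub_self]
        · rw [if_neg hx, if_neg hx, smul_eq_mul, mul_zero, sub_zero]
      have hsub : y'.coeff.support ⊆ y.coeff.support.erase g := by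
        intro x hx
        rw [Finsupp.mem_support_iff] at hx
        rw [Finset.mem_erase]
        constructor
        · intro hxg
          apply hx
          have hcj : IsConj g x := by rw [hxg]
          rw [happ, if_pos hcj]
        · rw [Finsupp.mem_support_iff]
          intro h0
          apply hx
          rw [happ]
          by_cases hc : IsConj g x
          · rw [if_pos hc]
          · rw [if_neg hc]; exact h0
      have hlt : y'.coeff.support.card < n := by
        rw [← hcard]
        exact lt_of_le_of_lt (Finset.card_le_card hsub) (Finset.card_erase_lt_of_mem hg)
      have hy'W : y' ∈ W p G := by
        refine ih _ hlt y' rfl ?_ ?_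
        · intro x h
          rw [happ, happ]
          have h1 : IsConj h (x * h * x⁻¹) := isConj_iff.mpr ⟨x, rfl⟩
          by_cases hc : IsConj g h
          · rw [if_pos (hc.trans h1), if_pos hc]
          · rw [if_neg (fun hcc => hc (hcc.trans h1.symm)), if_neg hc, hcf x h]
        · intro h hh
          exact hsupp h (Finset.erase_subset _ _ (hsub hh))
      have hyW : y = y' + y.coeff g • classSum p G g := by rw [hy', sub_add_cancel]
      rw [hyW]
      exact Submodule.add_mem _ hy'W
        (Submodule.smul_mem _ _ (Submodule.subset_span ⟨g, hgZ, rfl⟩))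


theorem conj_mem_center_iff {x h : G} :
    x * h * x⁻¹ ∈ Subgroup.center G ↔ h ∈ Subgroup.center G := by
  constructor
  · intro hm
    have hc := Subgroup.mem_center_iff.mp hm
    have h1 : h = x⁻¹ * (x * h * x⁻¹) * x := by group
    have h2 : x⁻¹ * (x * h * x⁻¹) * x = x * h * x⁻¹ := by rw [hc x⁻¹]; group
    rw [h1, h2]
    exact hm
  · intro hm
    have hc := Subgroup.mem_center_iff.mp hm
    have h1 : x * h * x⁻¹ = h := by rw [hc x]; group
    rw [h1]
    exact hm

theorem supp_one_central : ∀ g ∈ (1 : MonoidAlgebra (ZMod p) G).coeff.support,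
    g ∈ Subgroup.center G := by
  intro g hg
  rw [MonoidAlgebra.one_def, MonoidAlgebra.coeff_single] at hg
  rw [Finset.mem_singleton.mp (Finsupp.support_single_subset hg)]
  exact Subgroup.one_mem _

theorem supp_mul_central {a b : MonoidAlgebra (ZMod p) G}
    (ha : ∀ g ∈ a.coeff.support, g ∈ Subgroup.center G)
    (hb : ∀ g ∈ b.coeff.support, g ∈ Subgroup.center G) :
    ∀ g ∈ (a * b).coeff.support, g ∈ Subgroup.center G := by
  intro g hg
  have h1 := MonoidAlgebra.support_coeff_mul_subset a b hg
  rw [Finset.mem_mul] at h1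
  obtain ⟨x, hx, y, hy, rfl⟩ := h1
  exact Subgroup.mul_mem _ (ha x hx) (hb y hy)

theorem supp_pow_central {a : MonoidAlgebra (ZMod p) G}
    (ha : ∀ g ∈ a.coeff.support, g ∈ Subgroup.center G) (n : ℕ) :
    ∀ g ∈ (a ^ n).coeff.support, g ∈ Subgroup.center G := by
  induction n with
  | zero => rw [pow_zero]; exact supp_one_central
  | succ n ih => rw [pow_succ]; exact supp_mul_central ih ha

theorem aug_eq_sum_support (x : MonoidAlgebra (ZMod p) G) :
    aug p G x = ∑ g ∈ x.coeff.support, x.coeff g := by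
  rw [aug, MonoidAlgebra.lift_apply]
  rw [Finsupp.sum]
  exact Finset.sum_congr rfl fun g _ => by simp

theorem nontrivial_MA : Nontrivial (MonoidAlgebra (ZMod p) G) := by
  refine ⟨⟨0, 1, fun h => ?_⟩⟩
  have h1 := congrArg (aug p G) h
  rw [map_zero, map_one] at h1
  exact zero_ne_one h1

theorem isNilpotent_single_sub_one (hG : IsPGroup p G) (h : G) :
    IsNilpotent (of (ZMod p) G h - 1) := by
  haveI := nontrivial_MA (p := p) (G := G)
  haveI : CharP (MonoidAlgebra (ZMod p) G) p :=
    charP_of_injective_algebraMap' (ZMod p) (A := MonoidAlgebra (ZMod p) G) p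
  haveI : ExpChar (MonoidAlgebra (ZMod p) G) p := ExpChar.prime Fact.out
  obtain ⟨n, hn⟩ := IsPGroup.iff_card.mp hG
  refine ⟨p ^ n, ?_⟩
  rw [sub_pow_char_pow_of_commute p n (Commute.one_right _)]
  rw [← map_pow, one_pow, ← hn, pow_card_eq_one']
  rw [map_one, sub_self]

theorem isNilpotent_sum {ι : Type*} {s : Finset ι} {f : ι → MonoidAlgebra (ZMod p) G}
    (hnil : ∀ i ∈ s, IsNilpotent (f i))
    (hcomm : ∀ i ∈ s, ∀ a, a * f i = f i * a) :
    IsNilpotent (∑ i ∈ s, f i) := by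
  classical
  induction s using Finset.induction_on with
  | empty => simp
  | @insert a s ha ih =>
    rw [Finset.sum_insert ha]
    have hca : Commute (f a) (∑ i ∈ s, f i) :=
      Commute.symm (hcomm a (Finset.mem_insert_self _ _) _)
    refine hca.isNilpotent_add (hnil _ (Finset.mem_insert_self _ _)) ?_
    exact ih (fun i hi => hnil i (Finset.mem_insert_of_mem hi))
      (fun i hi => hcomm i (Finset.mem_insert_of_mem hi))

theorem isNilpotent_of_central_aug_zero (hG : IsPGroup p G)
    {x : MonoidAlgebra (ZMod p) G}
    (hsupp : ∀ g ∈ x.coeff.support, g ∈ Subgroup.center G) (haug : aug p G x = 0) :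
    IsNilpotent x := by
  have hsingle : ∀ h : G, (x.coeff h) • (of (ZMod p) G h - 1)
      = MonoidAlgebra.single h (x.coeff h) - (x.coeff h) • 1 := by
    intro h
    rw [smul_sub]
    congr 1
    rw [MonoidAlgebra.of_apply, MonoidAlgebra.smul_single', mul_one]
  have hsum : ∑ h ∈ x.coeff.support, MonoidAlgebra.single h (x.coeff h) = x :=
      MonoidAlgebra.sum_coeff_single x
  have hx : x = ∑ h ∈ x.coeff.support, (x.coeff h) • (of (ZMod p) G h - 1) := by
    rw [Finset.sum_congr rfl fun h _ => hsingle h, Finset.sum_sub_distrib, hsum,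
      ← Finset.sum_smul, ← aug_eq_sum_support, haug, zero_smul, sub_zero]
  rw [hx]
  apply isNilpotent_sum
  · intro h _
    exact (isNilpotent_single_sub_one hG h).smul _
  · intro h hh a
    apply central_of_supp_center
    intro g hg
    have h1 : g ∈ (of (ZMod p) G h - 1).coeff.support := by
      rw [MonoidAlgebra.coeff_smul] at hg; exact Finsupp.support_smul hg
    rw [MonoidAlgebra.coeff_sub] at h1
    rcases Finset.mem_union.mp (Finsupp.support_sub h1) with h2 | h2
    · rw [MonoidAlgebra.of_apply, MonoidAlgebra.coeff_single] at h2
      rw [Finset.mem_singleton.mp (Finsupp.support_single_subset h2)]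
      exact hsupp h hh
    · exact supp_one_central g h2

theorem central_inverse (hG : IsPGroup p G) {z : MonoidAlgebra (ZMod p) G}
    (hsupp : ∀ g ∈ z.coeff.support, g ∈ Subgroup.center G) (haug : aug p G z = 1) :
    ∃ zi : MonoidAlgebra (ZMod p) G, (∀ g ∈ zi.coeff.support, g ∈ Subgroup.center G) ∧
      z * zi = 1 ∧ zi * z = 1 := by
  set x := z - 1 with hxdef
  have hsuppx : ∀ g ∈ x.coeff.support, g ∈ Subgroup.center G := by
    intro g hg
    rw [hxdef, MonoidAlgebra.coeff_sub] at hg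
    rcases Finset.mem_union.mp (Finsupp.support_sub hg) with h | h
    · exact hsupp g h
    · exact supp_one_central g h
  have haugx : aug p G x = 0 := by rw [hxdef, map_sub, map_one, haug, sub_self]
  obtain ⟨k, hk⟩ := isNilpotent_of_central_aug_zero hG hsuppx haugx
  set u := -x with hu
  have hsuppu : ∀ g ∈ u.coeff.support, g ∈ Subgroup.center G := by
    intro g hg
    rw [hu, MonoidAlgebra.coeff_neg, Finsupp.support_neg] at hg
    exact hsuppx g hg
  have huk : u ^ k = 0 := by rw [hu, neg_pow, hk, mul_zero]
  set zi := ∑ i ∈ Finset.range k, u ^ i with hzi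
  have hzu : z = 1 - u := by rw [hu, hxdef]; abel
  refine ⟨zi, ?_, ?_, ?_⟩
  · intro g hg
    rw [hzi, MonoidAlgebra.coeff_sum] at hg
    obtain ⟨i, _, hgi⟩ := Finsupp.mem_support_finset_sum g hg
    exact supp_pow_central hsuppu i g hgi
  · have h2 : (u - 1) * zi = u ^ k - 1 := mul_geom_sum u k
    rw [hzu, ← neg_sub u 1, neg_mul, h2, huk, zero_sub, neg_neg]
  · have h2 : zi * (u - 1) = u ^ k - 1 := geom_sum_mul u k
    rw [hzu, ← neg_sub u 1, mul_neg, h2, huk, zero_sub, neg_neg]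


theorem one_add_pow {t : MonoidAlgebra (ZMod p) G} (ht : t * t = 0) (k : ℕ) :
    (1 + t) ^ k = 1 + (k : ZMod p) • t := by
  induction k with
  | zero => simp
  | succ k ih =>
    rw [pow_succ, ih, add_mul, one_mul, smul_mul_assoc, mul_add, mul_one, ht, add_zero,
      Nat.cast_succ, add_smul, one_smul]
    abel

theorem mem_Nsub_of_val (hKZ : ∀ c ∈ commutator G, c ∈ Subgroup.center G)
    (hG' : Nat.card (commutator G) = p) {t : MonoidAlgebra (ZMod p) G} (ht : t ∈ W p G) :
    ∀ v : (MonoidAlgebra (ZMod p) G)ˣ,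
      (v : MonoidAlgebra (ZMod p) G) = 1 + t → v ∈ Nsub p G := by
  haveI : NeZero p := ⟨(Fact.out : p.Prime).pos.ne'⟩
  induction ht using Submodule.span_induction with
  | mem y hy =>
    intro v hv
    obtain ⟨g, hg, rfl⟩ := hy
    exact Subgroup.subset_closure ⟨g, hg, hv⟩
  | zero =>
    intro v hv
    have h1 : v = 1 := Units.ext (by rw [hv, add_zero, Units.val_one])
    rw [h1]
    exact Subgroup.one_mem _
  | add y z hy hz hy' hz' =>
    intro v hv
    have hyz : y * z = 0 := W_mul_W hKZ hG' hy hz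
    have hy2 : y * y = 0 := W_mul_W hKZ hG' hy hy
    have hz2 : z * z = 0 := W_mul_W hKZ hG' hz hz
    let v₁ : (MonoidAlgebra (ZMod p) G)ˣ :=
      ⟨1 + y, 1 - y,
        by rw [show (1 + y) * (1 - y) = 1 - y * y from by noncomm_ring, hy2, sub_zero],
        by rw [show (1 - y) * (1 + y) = 1 - y * y from by noncomm_ring, hy2, sub_zero]⟩
    let v₂ : (MonoidAlgebra (ZMod p) G)ˣ :=
      ⟨1 + z, 1 - z,
        by rw [show (1 + z) * (1 - z) = 1 - z * z from by noncomm_ring, hz2, sub_zero],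
        by rw [show (1 - z) * (1 + z) = 1 - z * z from by noncomm_ring, hz2, sub_zero]⟩
    have hv₁ : v₁ ∈ Nsub p G := hy' v₁ rfl
    have hv₂ : v₂ ∈ Nsub p G := hz' v₂ rfl
    have hveq : v = v₁ * v₂ := by
      apply Units.ext
      rw [hv, Units.val_mul]
      show 1 + (y + z) = (1 + y) * (1 + z)
      rw [show (1 + y) * (1 + z) = 1 + (y + z) + y * z from by noncomm_ring, hyz, add_zero]
    rw [hveq]
    exact Subgroup.mul_mem _ hv₁ hv₂
  | smul c y hy hy' =>
    intro v hv
    have hy2 : y * y = 0 := W_mul_W hKZ hG' hy hy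
    let v₁ : (MonoidAlgebra (ZMod p) G)ˣ :=
      ⟨1 + y, 1 - y,
        by rw [show (1 + y) * (1 - y) = 1 - y * y from by noncomm_ring, hy2, sub_zero],
        by rw [show (1 - y) * (1 + y) = 1 - y * y from by noncomm_ring, hy2, sub_zero]⟩
    have hv₁ : v₁ ∈ Nsub p G := hy' v₁ rfl
    have hveq : v = v₁ ^ (c.val) := by
      apply Units.ext
      rw [hv, Units.val_pow_eq_pow_val]
      show 1 + c • y = (1 + y) ^ c.val
      rw [one_add_pow hy2, ZMod.natCast_zmod_val]
    rw [hveq]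
    exact Subgroup.pow_mem _ hv₁ _

theorem Nsub_val (hKZ : ∀ c ∈ commutator G, c ∈ Subgroup.center G)
    (hG' : Nat.card (commutator G) = p) {u : (MonoidAlgebra (ZMod p) G)ˣ}
    (hu : u ∈ Nsub p G) :
    ∃ t ∈ W p G, (u : MonoidAlgebra (ZMod p) G) = 1 + t := by
  induction hu using Subgroup.closure_induction with
  | mem v hv =>
    obtain ⟨g, hg, hval⟩ := hv
    exact ⟨classSum p G g, Submodule.subset_span ⟨g, hg, rfl⟩, hval⟩
  | one => exact ⟨0, Submodule.zero_mem _, by rw [Units.val_one, add_zero]⟩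
  | mul x y hx hy hx' hy' =>
    obtain ⟨t, htW, ht⟩ := hx'
    obtain ⟨s, hsW, hs⟩ := hy'
    refine ⟨t + s, Submodule.add_mem _ htW hsW, ?_⟩
    rw [Units.val_mul, ht, hs,
      show (1 + t) * (1 + s) = 1 + (t + s) + t * s from by noncomm_ring,
      W_mul_W hKZ hG' htW hsW, add_zero]
  | inv x hx hx' =>
    obtain ⟨t, htW, ht⟩ := hx'
    refine ⟨-t, Submodule.neg_mem _ htW, ?_⟩
    have h2 : (x : MonoidAlgebra (ZMod p) G) * (1 + -t) = 1 := by
      rw [ht, show (1 + t) * (1 + -t) = 1 - t * t from by noncomm_ring,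
        W_mul_W hKZ hG' htW htW, sub_zero]
    exact Units.inv_eq_of_mul_eq_one_right h2

theorem Vcenter_prop (hG : IsPGroup p G) {u : (MonoidAlgebra (ZMod p) G)ˣ}
    (hu : u ∈ Vcenter p G) :
    u ∈ V p G ∧ ∀ g ∈ (u : MonoidAlgebra (ZMod p) G).coeff.support, g ∈ Subgroup.center G := by
  induction hu using Subgroup.closure_induction with
  | mem v hv => exact hv
  | one =>
    refine ⟨Subgroup.one_mem _, ?_⟩
    rw [Units.val_one]
    exact supp_one_central
  | mul x y hx hy hx' hy' =>
    refine ⟨Subgroup.mul_mem _ hx'.1 hy'.1, ?_⟩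
    rw [Units.val_mul]
    exact supp_mul_central hx'.2 hy'.2
  | inv x hx hx' =>
    refine ⟨Subgroup.inv_mem _ hx'.1, ?_⟩
    obtain ⟨zi, hzi, hz1, hz2⟩ := central_inverse hG hx'.2 (mem_V_iff.mp hx'.1)
    rw [show ((x⁻¹ : (MonoidAlgebra (ZMod p) G)ˣ) : MonoidAlgebra (ZMod p) G) = zi from
      Units.inv_eq_of_mul_eq_one_right hz1]
    exact hzi

theorem mem_mapCenter_iff {u : (MonoidAlgebra (ZMod p) G)ˣ} :
    u ∈ (Subgroup.center ↥(V p G)).map (V p G).subtype ↔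
      (u ∈ V p G ∧ ∀ a : MonoidAlgebra (ZMod p) G,
        a * (u : MonoidAlgebra (ZMod p) G) = (u : MonoidAlgebra (ZMod p) G) * a) := by
  constructor
  · rintro ⟨w, hw, rfl⟩
    refine ⟨w.2, ?_⟩
    refine comm_of_all (fun g => ?_) 
    let gu : (MonoidAlgebra (ZMod p) G)ˣ := Units.map (of (ZMod p) G : G →* _) (toUnits g)
    have hval : (gu : MonoidAlgebra (ZMod p) G) = of (ZMod p) G g := rfl
    have hgV : gu ∈ V p G := mem_V_iff.mpr (by rw [hval]; exact aug_of p G g)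
    have h1 := Subgroup.mem_center_iff.mp hw ⟨gu, hgV⟩
    exact congrArg (fun v : ↥(V p G) =>
      ((v : (MonoidAlgebra (ZMod p) G)ˣ) : MonoidAlgebra (ZMod p) G)) h1
  · rintro ⟨h1, h2⟩
    refine ⟨⟨u, h1⟩, ?_, rfl⟩
    rw [SetLike.mem_coe, Subgroup.mem_center_iff]
    intro v
    apply Subtype.ext
    apply Units.ext
    exact h2 _

end CVaux

/-- For an odd prime `p` and a finite nonabelian `p`-group `G` with `|G'| = p`,
`ζ(V(𝔽_p G)) = V(𝔽_p ζ(G)) × N`, with `N` elementary abelian. -/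
theorem center_V_decomposition (p : ℕ) [Fact p.Prime] (hodd : 2 < p) (G : Type*)
    [Group G] [Fintype G] [DecidableEq G] (hG : IsPGroup p G)
    (hna : ¬ ∀ a b : G, a * b = b * a) (hG' : Nat.card (commutator G) = p) :
    (Subgroup.center ↥(V p G)).map (V p G).subtype = Vcenter p G ⊔ Nsub p G ∧
    Vcenter p G ⊓ Nsub p G = ⊥ ∧
    (∀ n ∈ Nsub p G, n ^ p = 1) ∧
    (∀ m ∈ Nsub p G, ∀ n ∈ Nsub p G, m * n = n * m) := by
  have hKZ := CVaux.commutator_le_center hG hG'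
  refine ⟨?_, ?_, ?_, ?_⟩
  · apply le_antisymm
    · intro u hu
      rw [CVaux.mem_mapCenter_iff] at hu
      obtain ⟨huV, hc⟩ := hu
      have hcf : ∀ x h : G, (u : MonoidAlgebra (ZMod p) G).coeff (x * h * x⁻¹)
          = (u : MonoidAlgebra (ZMod p) G).coeff h := by
        intro x h
        have h1 := hc (of (ZMod p) G x)
        have h2 := congrArg (fun f : MonoidAlgebra (ZMod p) G => f.coeff (x * h)) h1
        simp only [MonoidAlgebra.of_apply, MonoidAlgebra.coeff_single_mul_apply,
          MonoidAlgebra.coeff_mul_single_apply, one_mul, mul_one] at h2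
        have h3 : x⁻¹ * (x * h) = h := by group
        rw [h3] at h2
        exact h2.symm
      haveI : DecidablePred (· ∈ Subgroup.center G) := fun _ => Classical.propDecidable _
      set z : MonoidAlgebra (ZMod p) G :=
        MonoidAlgebra.ofCoeff ((u : MonoidAlgebra (ZMod p) G).coeff.filter (· ∈ Subgroup.center G)) with hz
      set y : MonoidAlgebra (ZMod p) G := MonoidAlgebra.ofCoeff ((u : MonoidAlgebra (ZMod p) G).coeff.filter
        (fun g => ¬ g ∈ Subgroup.center G)) with hy
      have hzy : z + y = (u : MonoidAlgebra (ZMod p) G) :=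
        MonoidAlgebra.coeff_injective (Finsupp.filter_pos_add_filter_neg _ _)
      have hysupp : ∀ h ∈ y.coeff.support, h ∉ Subgroup.center G := by
        intro h hh
        rw [hy, MonoidAlgebra.coeff_ofCoeff, Finsupp.support_filter, Finset.mem_filter] at hh
        exact hh.2
      have hycf : ∀ x h : G, y.coeff (x * h * x⁻¹) = y.coeff h := by
        intro x h
        rw [hy]
        simp only [MonoidAlgebra.coeff_ofCoeff, Finsupp.filter_apply]
        rw [hcf x h]
        by_cases hmem : h ∈ Subgroup.center G
        · rw [if_neg (fun hn => hn (CVaux.conj_mem_center_iff.mpr hmem)),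
            if_neg (fun hn => hn hmem)]
        · rw [if_pos (fun hn => hmem (CVaux.conj_mem_center_iff.mp hn)),
            if_pos hmem]
      have hyW : y ∈ CVaux.W p G := CVaux.classfun_mem_W hKZ hG' _ y rfl hycf hysupp
      have hzsupp : ∀ g ∈ z.coeff.support, g ∈ Subgroup.center G := by
        intro g hgz
        rw [hz, MonoidAlgebra.coeff_ofCoeff, Finsupp.support_filter, Finset.mem_filter] at hgz
        exact hgz.2
      have haugu : aug p G (u : MonoidAlgebra (ZMod p) G) = 1 := CVaux.mem_V_iff.mp huV
      have haugz : aug p G z = 1 := by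
        have h4 := congrArg (aug p G) hzy
        rw [map_add, CVaux.W_aug hKZ hG' hyW, add_zero] at h4
        rw [h4, haugu]
      obtain ⟨zi, hzisupp, hz1, hz2⟩ := CVaux.central_inverse hG hzsupp haugz
      let zu : (MonoidAlgebra (ZMod p) G)ˣ := ⟨z, zi, hz1, hz2⟩
      have hzuV : zu ∈ Vcenter p G :=
        Subgroup.subset_closure ⟨CVaux.mem_V_iff.mpr haugz, hzsupp⟩
      have htW : zi * y ∈ CVaux.W p G := CVaux.central_mul_W hKZ hG' hzisupp hyW
      have hnuval : ((zu⁻¹ * u : (MonoidAlgebra (ZMod p) G)ˣ) : MonoidAlgebra (ZMod p) G)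
          = 1 + zi * y := by
        rw [Units.val_mul]
        show zi * (u : MonoidAlgebra (ZMod p) G) = 1 + zi * y
        rw [← hzy, mul_add, hz2]
      have hnuN : zu⁻¹ * u ∈ Nsub p G := CVaux.mem_Nsub_of_val hKZ hG' htW _ hnuval
      have hdecomp : u = zu * (zu⁻¹ * u) := by rw [mul_inv_cancel_left]
      rw [hdecomp]
      exact Subgroup.mul_mem _ ((le_sup_left : Vcenter p G ≤ _) hzuV)
        ((le_sup_right : Nsub p G ≤ _) hnuN)
    · rw [sup_le_iff]
      constructor
      · rw [Vcenter, Subgroup.closure_le]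
        rintro u ⟨h1, h2⟩
        rw [SetLike.mem_coe, CVaux.mem_mapCenter_iff]
        exact ⟨h1, CVaux.central_of_supp_center h2⟩
      · rw [Nsub, Subgroup.closure_le]
        rintro u ⟨g, hg, hval⟩
        rw [SetLike.mem_coe, CVaux.mem_mapCenter_iff]
        constructor
        · rw [CVaux.mem_V_iff, hval, map_add, map_one, CVaux.classSum_eq hKZ hG' hg,
            map_mul, CVaux.aug_sg hG', mul_zero, add_zero]
        · intro a
          rw [hval, CVaux.classSum_eq hKZ hG' hg, mul_add, add_mul, mul_one, one_mul,
            CVaux.classSum_comm hKZ g a]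
  · rw [eq_bot_iff]
    intro u hu
    rw [Subgroup.mem_inf] at hu
    obtain ⟨h1, h2⟩ := hu
    obtain ⟨t, htW, hval⟩ := CVaux.Nsub_val hKZ hG' h2
    have hsupp := (CVaux.Vcenter_prop hG h1).2
    have ht0 : t = 0 := by
      ext x
      show t.coeff x = 0
      by_cases hx : x ∈ Subgroup.center G
      · exact CVaux.W_apply_center htW hx
      · have hxu : (u : MonoidAlgebra (ZMod p) G).coeff x = 0 := by
          by_contra hne
          exact hx (hsupp x (Finsupp.mem_support_iff.mpr hne))
        have h3 := congrArg (fun f : MonoidAlgebra (ZMod p) G => f.coeff x) hval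
        rw [MonoidAlgebra.coeff_add, Finsupp.add_apply] at h3
        rw [hxu] at h3
        have hx1 : x ≠ 1 := fun h => hx (h ▸ Subgroup.one_mem _)
        have hone : (1 : MonoidAlgebra (ZMod p) G).coeff x = 0 := by
          rw [MonoidAlgebra.one_def, MonoidAlgebra.coeff_single, Finsupp.single_apply, if_neg (fun h => hx1 h.symm)]
        rw [hone, zero_add] at h3
        exact h3.symm
    rw [Subgroup.mem_bot]
    exact Units.ext (by rw [hval, ht0, add_zero, Units.val_one])
  · intro n hn
    obtain ⟨t, htW, hval⟩ := CVaux.Nsub_val hKZ hG' hn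
    have ht2 : t * t = 0 := CVaux.W_mul_W hKZ hG' htW htW
    apply Units.ext
    rw [Units.val_pow_eq_pow_val, hval, CVaux.one_add_pow ht2 p, ZMod.natCast_self,
      zero_smul, add_zero, Units.val_one]
  · intro m hm n hn
    obtain ⟨t, htW, htv⟩ := CVaux.Nsub_val hKZ hG' hm
    obtain ⟨s, hsW, hsv⟩ := CVaux.Nsub_val hKZ hG' hn
    apply Units.ext
    rw [Units.val_mul, Units.val_mul, htv, hsv,
      show (1 + t) * (1 + s) = 1 + t + s + t * s from by noncomm_ring,
      show (1 + s) * (1 + t) = 1 + s + t + s * t from by noncomm_ring,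
      CVaux.W_mul_W hKZ hG' htW hsW, CVaux.W_mul_W hKZ hG' hsW htW, add_zero, add_zero]
    abel
end

section
/- Let G be a finite p-group with commutator subgroup of order p, p > 2. Then for every x ∈ V(𝔽_p G), writing x = ∑_{g∈G} α_g g, one has x^{p²} = ∑_{g∈G} α_g g^{p²}. Consequently V(𝔽_p G)^{p²} = V(𝔽_p G^{p²}). -/
open MonoidAlgebra

open MonoidAlgebra
open scoped commutatorElement

section Aux

variable {p : ℕ} [Fact p.Prime] {G : Type*} [Group G]

lemma charP_MA (H : Type*) [Monoid H] : CharP (MonoidAlgebra (ZMod p) H) p := by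
  apply charP_of_injective_algebraMap (R := ZMod p)
  intro a b hab
  have h : Finsupp.single (1 : H) a = Finsupp.single (1 : H) b := by
    rw [show a = b by simpa [MonoidAlgebra.coe_algebraMap] using hab]
  exact Finsupp.single_injective 1 h

lemma commute_single {g : G} (hg : ∀ h : G, Commute g h) (b : ZMod p)
    (r : MonoidAlgebra (ZMod p) G) : Commute (MonoidAlgebra.single g b) r := by
  induction r using MonoidAlgebra.induction_linear with
  | zero => exact Commute.zero_right _
  | add f₁ f₂ h₁ h₂ => exact Commute.add_right h₁ h₂
  | single a c =>
      show single g b * single a c = single a c * single g b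
      rw [MonoidAlgebra.single_mul_single, MonoidAlgebra.single_mul_single, (hg a).eq,
        mul_comm b c]

lemma commute_of {g : G} (hg : ∀ h : G, Commute g h)
    (r : MonoidAlgebra (ZMod p) G) : Commute (MonoidAlgebra.of (ZMod p) G g) r := by
  simpa [MonoidAlgebra.of_apply] using commute_single hg 1 r

lemma sum_pow_char_of_commute {R : Type*} [Ring R] [CharP R p] {ι : Type*}
    (s : Finset ι) (f : ι → R) (hc : ∀ i ∈ s, ∀ j ∈ s, Commute (f i) (f j)) :
    (∑ i ∈ s, f i) ^ p = ∑ i ∈ s, f i ^ p := by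
  classical
  induction s using Finset.induction_on with
  | empty => simp [zero_pow (Fact.out (p := p.Prime)).ne_zero]
  | insert _ _ ha ih =>
      rename_i a s
      rw [Finset.sum_insert ha, Finset.sum_insert ha,
        add_pow_char_of_commute p (Commute.sum_right _ _ _ fun j hj =>
          hc a (Finset.mem_insert_self a s) j (Finset.mem_insert_of_mem hj)),
        ih fun i hi j hj =>
          hc i (Finset.mem_insert_of_mem hi) j (Finset.mem_insert_of_mem hj)]

end Aux

section Grp

variable {p : ℕ} [Fact p.Prime] {G : Type*} [Group G]

lemma zmod_pow_pow_card {p : ℕ} [Fact p.Prime] (a : ZMod p) (e : ℕ) : a ^ p ^ e = a := by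
  induction e with
  | zero => simp
  | succ e ihe => rw [pow_succ, pow_mul, ihe, ZMod.pow_card]

/-- A generator of the commutator subgroup: central, of order dividing p,
and every element of the commutator subgroup is one of its powers. -/
lemma exists_central_gen (hG : IsPGroup p G) (hG' : Nat.card (commutator G) = p) :
    ∃ z : G, z ^ p = 1 ∧ (∀ g : G, Commute z g) ∧
      ∀ n ∈ commutator G, ∃ k : ℕ, z ^ k = n := by
  classical
  set N := commutator G with hN
  haveI : Finite N := by
    refine Nat.finite_of_card_ne_zero ?_
    rw [hG']; exact (Fact.out (p := p.Prime)).ne_zero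
  haveI : IsCyclic N := isCyclic_of_prime_card hG'
  obtain ⟨ζ, hζ⟩ := IsCyclic.exists_generator (α := N)
  refine ⟨(ζ : G), ?_, ?_, ?_⟩
  · have : ζ ^ p = 1 := by
      rw [← hG']; exact pow_card_eq_one'
    have := congrArg (Subtype.val) this
    simpa using this
  · -- centrality
    have horder : orderOf (ζ : G) = p := by
      have h1 : orderOf ζ ∣ p := hG' ▸ orderOf_dvd_natCard ζ
      have h2 : orderOf ζ ≠ 1 := by
        intro h
        have hζ1 : ζ = 1 := orderOf_eq_one_iff.mp h
        have : ∀ x : N, x = 1 := by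
          intro x
          obtain ⟨k, hk⟩ := (mem_powers_iff_mem_zpowers).mpr (hζ x)
          simpa [hζ1] using hk.symm
        have : Nat.card N = 1 := by
          haveI : Subsingleton N := ⟨fun a b => by rw [this a, this b]⟩
          exact Nat.card_eq_one_iff_unique.mpr ⟨inferInstance, ⟨1⟩⟩
        rw [hG'] at this
        exact (Fact.out (p := p.Prime)).one_lt.ne' this
      have := ((Fact.out (p := p.Prime)).eq_one_or_self_of_dvd _ h1).resolve_left h2
      rw [← orderOf_submonoid] at this
      exact this
    intro g
    -- conjugate of ζ by g is a power of ζ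
    have hmem : g * (ζ : G) * g⁻¹ ∈ N := (Subgroup.Normal.conj_mem inferInstance (ζ : G) ζ.2 g)
    obtain ⟨k, hk⟩ := (mem_powers_iff_mem_zpowers).mpr (hζ ⟨_, hmem⟩)
    have hk' : g * (ζ : G) * g⁻¹ = (ζ : G) ^ k := by
      have := congrArg (Subtype.val) hk
      simpa using this.symm
    -- iterate
    have hiter : ∀ m : ℕ, g ^ m * (ζ : G) * (g ^ m)⁻¹ = (ζ : G) ^ (k ^ m) := by
      intro m
      induction m with
      | zero => simp
      | succ m ih =>
          have : g ^ (m + 1) * (ζ : G) * (g ^ (m + 1))⁻¹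
              = g * (g ^ m * (ζ : G) * (g ^ m)⁻¹) * g⁻¹ := by
            rw [pow_succ']
            group
          rw [this, ih]
          have hconj : ∀ j : ℕ, g * (ζ : G) ^ j * g⁻¹ = (ζ : G) ^ (k * j) := by
            intro j
            induction j with
            | zero => simp
            | succ j ihj =>
                rw [pow_succ, ← mul_assoc]
                calc g * (ζ:G) ^ j * (ζ:G) * g⁻¹
                    = (g * (ζ:G) ^ j * g⁻¹) * (g * (ζ:G) * g⁻¹) := by group
                  _ = (ζ:G) ^ (k * j) * (ζ:G) ^ k := by rw [ihj, hk']
                  _ = (ζ:G) ^ (k * (j + 1)) := by rw [← pow_add, Nat.mul_succ]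
          rw [hconj]
          congr 1
          rw [pow_succ, mul_comm]
    obtain ⟨e, he⟩ := hG g
    have h1 : (ζ : G) ^ (k ^ (p ^ e)) = (ζ : G) := by
      have := hiter (p ^ e)
      rw [he] at this
      simpa using this.symm
    -- Fermat: k^(p^e) ≡ k [MOD p]
    have hfermat : (k : ZMod p) ^ (p ^ e) = (k : ZMod p) := zmod_pow_pow_card _ e
    have hmod : k ^ (p ^ e) ≡ k [MOD p] := by
      rw [← ZMod.natCast_eq_natCast_iff]
      push_cast
      exact hfermat
    have h2 : (ζ : G) ^ k = (ζ : G) := by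
      nth_rewrite 2 [← pow_one (ζ : G)] at h1 ⊢
      rw [pow_eq_pow_iff_modEq] at h1 ⊢
      rw [horder] at h1 ⊢
      exact (hmod.symm.trans h1)
    have : g * (ζ : G) * g⁻¹ = (ζ : G) := by rw [hk', h2]
    have := congrArg (· * g) this
    exact (by simpa [mul_assoc] using this.symm : (ζ : G) * g = g * ζ)
  · intro n hn
    obtain ⟨k, hk⟩ := (mem_powers_iff_mem_zpowers).mpr (hζ ⟨n, hn⟩)
    exact ⟨k, by simpa using congrArg (Subtype.val) hk⟩

end Grp

section Grp2

variable {p : ℕ} [Fact p.Prime] {G : Type*} [Group G]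

/-- commutator elements have order dividing p and are central. -/
lemma comm_facts (hG : IsPGroup p G) (hG' : Nat.card (commutator G) = p) :
    ∀ n ∈ commutator G, n ^ p = 1 ∧ ∀ g : G, Commute n g := by
  obtain ⟨z, hzp, hzc, hzgen⟩ := exists_central_gen hG hG'
  intro n hn
  obtain ⟨k, hk⟩ := hzgen n hn
  constructor
  · rw [← hk, ← pow_mul, mul_comm, pow_mul, hzp, one_pow]
  · intro g
    rw [← hk]
    exact (hzc g).pow_left k

/-- collection: `h^n * g = g * h^n * c^n` with `c = h⁻¹ * g⁻¹ * h * g`. -/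
lemma coll_aux (hG : IsPGroup p G) (hG' : Nat.card (commutator G) = p)
    (g h : G) (n : ℕ) :
    h ^ n * g = g * h ^ n * (h⁻¹ * g⁻¹ * h * g) ^ n := by
  set c := h⁻¹ * g⁻¹ * h * g with hc
  have hcmem : c ∈ commutator G := by
    have : c = ⁅h⁻¹, g⁻¹⁆ := by rw [hc, commutatorElement_def]; group
    rw [this, commutator_def]
    exact Subgroup.commutator_mem_commutator (Subgroup.mem_top _) (Subgroup.mem_top _)
  have hcc := (comm_facts hG hG' c hcmem).2
  induction n with
  | zero => simp
  | succ n ih =>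
      calc h ^ (n+1) * g = h * (h ^ n * g) := by rw [pow_succ']; group
        _ = h * (g * h ^ n * c ^ n) := by rw [ih]
        _ = (h * g) * h ^ n * c ^ n := by group
        _ = (g * h * c) * h ^ n * c ^ n := by
              congr 1
              congr 1
              rw [hc]; group
        _ = g * h * (c * h ^ n) * c ^ n := by group
        _ = g * h * (h ^ n * c) * c ^ n := by rw [(hcc (h ^ n)).eq]
        _ = g * h ^ (n+1) * c ^ (n+1) := by rw [pow_succ, pow_succ']; group

/-- collection: `(g*h)^n = g^n * h^n * c^(n choose 2)`. -/
lemma coll (hG : IsPGroup p G) (hG' : Nat.card (commutator G) = p)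
    (g h : G) (n : ℕ) :
    (g * h) ^ n = g ^ n * h ^ n * (h⁻¹ * g⁻¹ * h * g) ^ (n.choose 2) := by
  set c := h⁻¹ * g⁻¹ * h * g with hc
  have hcmem : c ∈ commutator G := by
    have : c = ⁅h⁻¹, g⁻¹⁆ := by rw [hc, commutatorElement_def]; group
    rw [this, commutator_def]
    exact Subgroup.commutator_mem_commutator (Subgroup.mem_top _) (Subgroup.mem_top _)
  have hcc := (comm_facts hG hG' c hcmem).2
  induction n with
  | zero => simp
  | succ n ih =>
      have hstep : h ^ n * g = g * h ^ n * c ^ n := coll_aux hG hG' g h n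
      calc (g * h) ^ (n+1) = (g * h) ^ n * (g * h) := by rw [pow_succ]
        _ = g ^ n * h ^ n * c ^ (n.choose 2) * (g * h) := by rw [ih]
        _ = g ^ n * (h ^ n * g) * (c ^ (n.choose 2) * h) := by
              have hcg : c ^ n.choose 2 * g = g * c ^ n.choose 2 := ((hcc g).pow_left _).eq
              calc g ^ n * h ^ n * c ^ n.choose 2 * (g * h)
                  = g ^ n * h ^ n * (c ^ n.choose 2 * g) * h := by group
                _ = g ^ n * h ^ n * (g * c ^ n.choose 2) * h := by rw [hcg]
                _ = g ^ n * (h ^ n * g) * (c ^ n.choose 2 * h) := by group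
        _ = g ^ n * (h ^ n * g) * (h * c ^ (n.choose 2)) := by
              rw [((hcc h).pow_left (n.choose 2)).eq]
        _ = g ^ n * (g * h ^ n * c ^ n) * (h * c ^ (n.choose 2)) := by rw [hstep]
        _ = g ^ (n+1) * h ^ n * (c ^ n * h) * c ^ (n.choose 2) := by
              rw [pow_succ]; group
        _ = g ^ (n+1) * h ^ n * (h * c ^ n) * c ^ (n.choose 2) := by
              rw [((hcc h).pow_left n).eq]
        _ = g ^ (n+1) * h ^ (n+1) * (c ^ n * c ^ (n.choose 2)) := by
              rw [pow_succ']; group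
        _ = g ^ (n+1) * h ^ (n+1) * c ^ ((n+1).choose 2) := by
              rw [← pow_add]
              congr 1
              rw [Nat.choose_succ_succ]
              simp [Nat.choose_one_right, Nat.add_comm]
  done

/-- the p-th power of any element is central. -/
lemma pow_p_central_s15 (hodd : 2 < p) (hG : IsPGroup p G)
    (hG' : Nat.card (commutator G) = p) (g : G) : ∀ h : G, Commute (g ^ p) h := by
  intro h
  have hstep : g ^ p * h = h * g ^ p * (g⁻¹ * h⁻¹ * g * h) ^ p := coll_aux hG hG' h g p
  have hcmem : (g⁻¹ * h⁻¹ * g * h) ∈ commutator G := by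
    have : g⁻¹ * h⁻¹ * g * h = ⁅g⁻¹, h⁻¹⁆ := by rw [commutatorElement_def]; group
    rw [this, commutator_def]
    exact Subgroup.commutator_mem_commutator (Subgroup.mem_top _) (Subgroup.mem_top _)
  have h1 : (g⁻¹ * h⁻¹ * g * h) ^ p = 1 := (comm_facts hG hG' _ hcmem).1
  rw [h1, mul_one] at hstep
  exact hstep

/-- the `p²` power map is a homomorphism. -/
lemma pow_p_sq_hom (hodd : 2 < p) (hG : IsPGroup p G)
    (hG' : Nat.card (commutator G) = p) (g h : G) :
    (g * h) ^ (p ^ 2) = g ^ (p ^ 2) * h ^ (p ^ 2) := by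
  have hp2 : (p : ℕ) ^ 2 = p * p := sq p
  have hch : (h⁻¹ * g⁻¹ * h * g) ^ (p.choose 2) = 1 := by
    have hcmem : (h⁻¹ * g⁻¹ * h * g) ∈ commutator G := by
      have : h⁻¹ * g⁻¹ * h * g = ⁅h⁻¹, g⁻¹⁆ := by rw [commutatorElement_def]; group
      rw [this, commutator_def]
      exact Subgroup.commutator_mem_commutator (Subgroup.mem_top _) (Subgroup.mem_top _)
    have h1 : (h⁻¹ * g⁻¹ * h * g) ^ p = 1 := (comm_facts hG hG' _ hcmem).1
    have hpodd : p % 2 = 1 :=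
      Nat.odd_iff.mp ((Fact.out (p := p.Prime)).odd_of_ne_two (by omega))
    have hdvd : 2 ∣ p - 1 := by omega
    have h2 : p.choose 2 = p * ((p - 1) / 2) := by
      rw [Nat.choose_two_right, Nat.mul_div_assoc p hdvd]
    rw [h2, pow_mul, h1, one_pow]
  have hgp : (g * h) ^ p = g ^ p * h ^ p := by
    rw [coll hG hG' g h p, hch, mul_one]
  rw [hp2, pow_mul, pow_mul, pow_mul, hgp,
    Commute.mul_pow (pow_p_central_s15 hodd hG hG' g (h ^ p))]

end Grp2
section MA

open MonoidAlgebra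

variable {p : ℕ} [Fact p.Prime] {G : Type*} [Group G]

/-- Frobenius on a monoid algebra, assuming the support is central. -/
lemma pow_p_eq_mapDomain {H : Type*} [Monoid H] (v : MonoidAlgebra (ZMod p) H)
    (hcomm : ∀ a ∈ v.coeff.support, ∀ b : H, Commute a b) :
    v ^ p = MonoidAlgebra.mapDomain (· ^ p) v := by
  classical
  haveI : CharP (MonoidAlgebra (ZMod p) H) p := charP_MA H
  have hv : v = ∑ a ∈ v.coeff.support, MonoidAlgebra.single a (v.coeff a) := by
    conv_lhs => rw [← MonoidAlgebra.sum_coeff_single v]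
    rfl
  have hmd : MonoidAlgebra.mapDomain (· ^ p : H → H) v
      = ∑ a ∈ v.coeff.support, MonoidAlgebra.single (a ^ p) (v.coeff a) := by
    apply MonoidAlgebra.coeff_injective
    rw [MonoidAlgebra.coeff_mapDomain, MonoidAlgebra.coeff_sum]; rfl
  rw [hmd]
  conv_lhs => rw [hv]
  rw [sum_pow_char_of_commute (p := p) _ _ ?_]
  · refine Finset.sum_congr rfl fun a ha => ?_
    rw [MonoidAlgebra.single_pow, ZMod.pow_card]
  · intro i hi j hj
    show MonoidAlgebra.single i (v.coeff i) * MonoidAlgebra.single j (v.coeff j)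
        = MonoidAlgebra.single j (v.coeff j) * MonoidAlgebra.single i (v.coeff i)
    rw [MonoidAlgebra.single_mul_single, MonoidAlgebra.single_mul_single,
      (hcomm i hi j).eq, mul_comm (v.coeff i) (v.coeff j)]

/-- The key identity: `x^(p²) = mapDomain (·^(p²)) x`. -/
lemma key_pow [Fintype G] (hodd : 2 < p) (hG : IsPGroup p G)
    (hG' : Nat.card (commutator G) = p)
    (x : MonoidAlgebra (ZMod p) G) :
    x ^ (p ^ 2) = MonoidAlgebra.mapDomain (· ^ (p ^ 2)) x := by
  classical
  haveI : CharP (MonoidAlgebra (ZMod p) G) p := charP_MA G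
  obtain ⟨z, hzp, hzc, hzgen⟩ := exists_central_gen hG hG'
  set π : MonoidAlgebra (ZMod p) G →+* MonoidAlgebra (ZMod p) (Abelianization G) :=
    MonoidAlgebra.mapDomainRingHom (ZMod p) (Abelianization.of (G := G)) with hπ
  have hπ_apply : ∀ v : MonoidAlgebra (ZMod p) G,
      π v = MonoidAlgebra.mapDomain (Abelianization.of (G := G)) v := fun v => rfl
  have hπ_single : ∀ (g : G) (b : ZMod p),
      π (MonoidAlgebra.single g b) = MonoidAlgebra.single (Abelianization.of g) b := by
    intro g b
    rw [hπ_apply, MonoidAlgebra.mapDomain_single]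
  set ofz : MonoidAlgebra (ZMod p) G := MonoidAlgebra.of (ZMod p) G z with hofz
  have hofz_comm : ∀ r : MonoidAlgebra (ZMod p) G, Commute ofz r :=
    fun r => commute_of hzc r
  set P : Submodule (ZMod p) (MonoidAlgebra (ZMod p) G) :=
    LinearMap.range (LinearMap.mulLeft (ZMod p) (ofz - 1)) with hP
  have hPmem : ∀ w : MonoidAlgebra (ZMod p) G,
      (∃ r : MonoidAlgebra (ZMod p) G, (ofz - 1) * r = w) ↔ w ∈ P := by
    intro w
    simp [hP, LinearMap.mem_range, LinearMap.mulLeft_apply]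
  have hsurj : Function.Surjective (Abelianization.of (G := G)) :=
    fun q => Quotient.exists_rep q
  set s : Abelianization G → G := Function.surjInv hsurj with hs
  have hsec : ∀ q, Abelianization.of (s q) = q := Function.surjInv_eq hsurj
  set σ : MonoidAlgebra (ZMod p) (Abelianization G) → MonoidAlgebra (ZMod p) G :=
    fun w => MonoidAlgebra.mapDomain s w with hσ
  have hσ0 : σ (0 : MonoidAlgebra (ZMod p) (Abelianization G)) = 0 := by
    show MonoidAlgebra.mapDomain s 0 = 0
    exact MonoidAlgebra.mapDomain_zero _
  have hterm : ∀ (g : G) (b : ZMod p),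
      (MonoidAlgebra.single g b
        - MonoidAlgebra.single (s (Abelianization.of g)) b : MonoidAlgebra (ZMod p) G) ∈ P := by
    intro g b
    set g' : G := s (Abelianization.of g) with hg'
    have hog : Abelianization.of (G := G) g' = Abelianization.of g := hsec _
    have hmk : (QuotientGroup.mk g' : G ⧸ commutator G) = QuotientGroup.mk g := hog
    have hmemN : g'⁻¹ * g ∈ commutator G := (QuotientGroup.eq).mp hmk
    obtain ⟨k, hk⟩ := hzgen _ hmemN
    have hgg : g = g' * z ^ k := by rw [hk]; group
    rw [← hPmem]
    refine ⟨MonoidAlgebra.single g' b * (∑ i ∈ Finset.range k, ofz ^ i), ?_⟩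
    have hcomm1 : Commute (ofz - 1) (MonoidAlgebra.single g' b) :=
      ((hofz_comm _).sub_left (Commute.one_left _))
    rw [← mul_assoc, hcomm1.eq, mul_assoc, mul_geom_sum]
    have hzk : (ofz ^ k : MonoidAlgebra (ZMod p) G)
        = MonoidAlgebra.single (z ^ k) 1 := by
      rw [hofz, ← map_pow]
      rw [MonoidAlgebra.of_apply]
    rw [mul_sub, mul_one, hzk, MonoidAlgebra.single_mul_single, mul_one, ← hgg]
  have hkey : ∀ v : MonoidAlgebra (ZMod p) G, v - σ (π v) ∈ P := by
    intro v
    have h1 : σ (π v) = ∑ a ∈ v.coeff.support,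
        (MonoidAlgebra.single (s (Abelianization.of a)) (v.coeff a) : MonoidAlgebra (ZMod p) G) := by
      apply MonoidAlgebra.coeff_injective
      show (Finsupp.mapDomain s (Finsupp.mapDomain (⇑(Abelianization.of (G := G))) v.coeff)
        : G →₀ ZMod p) = _
      rw [← Finsupp.mapDomain_comp, MonoidAlgebra.coeff_sum]
      rfl
    have h2 : v = ∑ a ∈ v.coeff.support, MonoidAlgebra.single a (v.coeff a) := by
      conv_lhs => rw [← MonoidAlgebra.sum_coeff_single v]
      rfl
    rw [h1]
    nth_rewrite 1 [h2]
    rw [← Finset.sum_sub_distrib]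
    exact Submodule.sum_mem _ fun g _ => hterm g (v.coeff g)
  have hfrob : ∀ v : MonoidAlgebra (ZMod p) G,
      π (v ^ p) = π (MonoidAlgebra.mapDomain (· ^ p) v) := by
    intro v
    rw [map_pow]
    have h1 : (π v) ^ p = MonoidAlgebra.mapDomain (· ^ p) (π v) :=
      pow_p_eq_mapDomain _ (fun a _ b => Commute.all a b)
    rw [h1]
    apply MonoidAlgebra.coeff_injective
    show Finsupp.mapDomain (· ^ p) (Finsupp.mapDomain (Abelianization.of (G := G)) v.coeff)
        = Finsupp.mapDomain (Abelianization.of (G := G)) (Finsupp.mapDomain (· ^ p) v.coeff)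
    have hfun : ((· ^ p : Abelianization G → Abelianization G)
          ∘ (Abelianization.of (G := G)))
        = (Abelianization.of (G := G)) ∘ (· ^ p : G → G) := by
      funext g
      simp [Function.comp, map_pow]
    rw [← Finsupp.mapDomain_comp, hfun, Finsupp.mapDomain_comp]
  set y : MonoidAlgebra (ZMod p) G :=
    MonoidAlgebra.mapDomain (· ^ p) x with hy
  have hysupp : ∀ a ∈ y.coeff.support, ∀ b : G, Commute a b := by
    intro a ha b
    have hmem := Finsupp.mapDomain_support (f := (· ^ p : G → G)) (s := x.coeff) ha
    obtain ⟨g, _, rfl⟩ := Finset.mem_image.mp hmem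
    exact pow_p_central_s15 hodd hG hG' g b
  have hycomm : ∀ r : MonoidAlgebra (ZMod p) G, Commute y r := by
    intro r
    have hyeq : y = ∑ a ∈ y.coeff.support, MonoidAlgebra.single a (y.coeff a) := by
      conv_lhs => rw [← MonoidAlgebra.sum_coeff_single y]
      rfl
    rw [hyeq]
    exact Commute.sum_left _ _ _ fun a ha => commute_single (hysupp a ha) _ r
  set c : MonoidAlgebra (ZMod p) G := x ^ p - y with hc
  have hπc : π c = 0 := by
    rw [hc, map_sub, hfrob x, hy, sub_self]
  have hcP : c ∈ P := by
    have h2 := hkey c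
    rw [hπc, hσ0, sub_zero] at h2
    exact h2
  obtain ⟨r, hr⟩ := (hPmem c).mpr hcP
  have hz0 : (ofz - 1 : MonoidAlgebra (ZMod p) G) ^ p = 0 := by
    rw [sub_pow_char_of_commute p (Commute.one_right _), one_pow]
    have hzz : (ofz : MonoidAlgebra (ZMod p) G) ^ p = 1 := by
      rw [hofz, ← map_pow, hzp, map_one]
    rw [hzz, sub_self]
  have hcp : c ^ p = 0 := by
    rw [← hr, Commute.mul_pow ((hofz_comm r).sub_left (Commute.one_left r)), hz0, zero_mul]
  have hxp : x ^ p = y + c := by rw [hc]; abel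
  have hx2 : x ^ (p ^ 2) = y ^ p := by
    rw [sq, pow_mul, hxp, add_pow_char_of_commute p (hycomm c), hcp, add_zero]
  rw [hx2, pow_p_eq_mapDomain y hysupp, hy]
  apply MonoidAlgebra.coeff_injective
  show Finsupp.mapDomain (· ^ p) (Finsupp.mapDomain (· ^ p) x.coeff)
    = Finsupp.mapDomain (· ^ (p ^ 2)) x.coeff
  rw [← Finsupp.mapDomain_comp]
  have hfun2 : ((· ^ p : G → G) ∘ (· ^ p : G → G)) = (· ^ (p ^ 2) : G → G) := by
    funext g
    show (g ^ p) ^ p = g ^ (p ^ 2)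
    rw [← pow_mul, sq]
  rw [hfun2]

end MA

/-- For an odd prime `p` and a finite `p`-group `G` with `|G'| = p`: for every
normalized unit `x = ∑ α_g g`, `x^{p²} = ∑ α_g g^{p²}`; consequently
`V(𝔽_p G)^{p²} = V(𝔽_p G^{p²})`. -/
theorem pow_p_sq_V (p : ℕ) [Fact p.Prime] (hodd : 2 < p) (G : Type*) [Group G]
    [Fintype G] (hG : IsPGroup p G) (hG' : Nat.card (commutator G) = p) :
    (∀ x ∈ V p G,
      ((x ^ (p ^ 2) : (MonoidAlgebra (ZMod p) G)ˣ) : MonoidAlgebra (ZMod p) G) =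
        ∑ g : G, ((x : (MonoidAlgebra (ZMod p) G)ˣ) : MonoidAlgebra (ZMod p) G).coeff g •
          MonoidAlgebra.of (ZMod p) G (g ^ (p ^ 2))) ∧
    {u : (MonoidAlgebra (ZMod p) G)ˣ | ∃ x ∈ V p G, u = x ^ (p ^ 2)} =
      {u : (MonoidAlgebra (ZMod p) G)ˣ | u ∈ V p G ∧
        ∀ g ∈ ((u : (MonoidAlgebra (ZMod p) G)ˣ) : MonoidAlgebra (ZMod p) G).coeff.support,
          g ∈ Subgroup.closure {h : G | ∃ g₀ : G, h = g₀ ^ (p ^ 2)}} := by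
    classical
  -- conversion between `mapDomain` and the `Fintype` sum
  have hconv : ∀ v : MonoidAlgebra (ZMod p) G,
      (MonoidAlgebra.mapDomain (· ^ (p ^ 2)) v : MonoidAlgebra (ZMod p) G)
        = ∑ g : G, v.coeff g • MonoidAlgebra.of (ZMod p) G (g ^ (p ^ 2)) := by
    intro v
    have h1 : (MonoidAlgebra.mapDomain (· ^ (p ^ 2)) v : MonoidAlgebra (ZMod p) G)
        = ∑ a ∈ v.coeff.support, MonoidAlgebra.single (a ^ (p ^ 2)) (v.coeff a) := by
      apply MonoidAlgebra.coeff_injective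
      rw [MonoidAlgebra.coeff_mapDomain, MonoidAlgebra.coeff_sum]
      rfl
    have h2 : ∀ g : G, (MonoidAlgebra.single (g ^ (p ^ 2)) (v.coeff g) : MonoidAlgebra (ZMod p) G)
        = v.coeff g • MonoidAlgebra.of (ZMod p) G (g ^ (p ^ 2)) := by
      intro g
      rw [MonoidAlgebra.of_apply, MonoidAlgebra.smul_single', mul_one]
    rw [h1, Finset.sum_subset (Finset.subset_univ v.coeff.support)]
    · exact Finset.sum_congr rfl fun g _ => h2 g
    · intro g _ hg
      rw [Finsupp.notMem_support_iff.mp hg, MonoidAlgebra.single_zero]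
  have hmain : ∀ v : MonoidAlgebra (ZMod p) G,
      v ^ (p ^ 2) = ∑ g : G, v.coeff g • MonoidAlgebra.of (ZMod p) G (g ^ (p ^ 2)) := by
    intro v
    rw [key_pow hodd hG hG' v, hconv]
  -- the p²-power map as a group hom
  have hψ : ∀ g h : G, (g * h) ^ (p ^ 2) = g ^ (p ^ 2) * h ^ (p ^ 2) :=
    pow_p_sq_hom hodd hG hG'
  set ψ : G →* G := MonoidHom.mk' (fun g => g ^ (p ^ 2)) hψ with hψdef
  have hSrange : Subgroup.closure {h : G | ∃ g₀ : G, h = g₀ ^ (p ^ 2)} ≤ ψ.range := by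
    rw [Subgroup.closure_le]
    rintro h ⟨g₀, rfl⟩
    exact ⟨g₀, rfl⟩
  have hV_iff : ∀ u : (MonoidAlgebra (ZMod p) G)ˣ,
      u ∈ V p G ↔ aug p G (u : MonoidAlgebra (ZMod p) G) = 1 := by
    intro u
    rw [V, MonoidHom.mem_ker, Units.ext_iff]
    simp [Units.coe_map]
  constructor
  · intro x _
    rw [Units.val_pow_eq_pow_val, hmain]
  · ext u
    simp only [Set.mem_setOf_eq]
    constructor
    · rintro ⟨x, hx, rfl⟩
      refine ⟨Subgroup.pow_mem _ hx _, ?_⟩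
      intro g hg
      rw [Units.val_pow_eq_pow_val,
        key_pow hodd hG hG' (x : MonoidAlgebra (ZMod p) G)] at hg
      have hmem := Finsupp.mapDomain_support hg
      obtain ⟨g₀, _, rfl⟩ := Finset.mem_image.mp hmem
      exact Subgroup.subset_closure ⟨g₀, rfl⟩
    · rintro ⟨hu, hsupp⟩
      set uval : MonoidAlgebra (ZMod p) G := (u : MonoidAlgebra (ZMod p) G) with huval
      set gg : G → G := fun h =>
        if hh : ∃ g₀ : G, g₀ ^ (p ^ 2) = h then hh.choose else 1 with hggdef
      have hgg : ∀ h ∈ uval.coeff.support, (gg h) ^ (p ^ 2) = h := by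
        intro h hh
        obtain ⟨g₀, hg₀⟩ := hSrange (hsupp h hh)
        have hex : ∃ g₁ : G, g₁ ^ (p ^ 2) = h := ⟨g₀, hg₀⟩
        rw [hggdef]
        simp only [dif_pos hex]
        exact hex.choose_spec
      set x : MonoidAlgebra (ZMod p) G := MonoidAlgebra.mapDomain gg uval
        with hxdef
      have hx2 : x ^ (p ^ 2) = uval := by
        rw [key_pow hodd hG hG' x]
        apply MonoidAlgebra.coeff_injective
        show (Finsupp.mapDomain (· ^ (p ^ 2)) (Finsupp.mapDomain gg uval.coeff) : G →₀ ZMod p)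
            = uval.coeff
        rw [← Finsupp.mapDomain_comp]
        refine Eq.trans (Finsupp.mapDomain_congr (g := id) ?_) Finsupp.mapDomain_id
        intro a ha
        simpa using hgg a ha
      have haug_u : aug p G uval = 1 := (hV_iff u).mp hu
      have haug_x : aug p G x = 1 := by
        have h3 : (aug p G x) ^ (p ^ 2) = 1 := by
          rw [← map_pow, hx2, haug_u]
        rwa [zmod_pow_pow_card (aug p G x) 2] at h3
      have hn : p ^ 2 = (p ^ 2 - 1) + 1 := by
        have : 0 < p ^ 2 := pow_pos (Fact.out (p := p.Prime)).pos 2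
        omega
      have hxu : x ^ (p ^ 2 - 1) * x = uval := by
        rw [← pow_succ, ← hn, hx2]
      have hux : x * x ^ (p ^ 2 - 1) = uval := by
        rw [← pow_succ', ← hn, hx2]
      have hinv_comm : ((u⁻¹ : (MonoidAlgebra (ZMod p) G)ˣ) : MonoidAlgebra (ZMod p) G) * x
          = x * ((u⁻¹ : (MonoidAlgebra (ZMod p) G)ˣ) : MonoidAlgebra (ZMod p) G) := by
        have hcomm : uval * x = x * uval := by
          rw [← hx2]
          exact (((Commute.refl x).pow_left _).eq)
        have h5 : ((u⁻¹ : (MonoidAlgebra (ZMod p) G)ˣ) : MonoidAlgebra (ZMod p) G)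
              * (uval * x) * ((u⁻¹ : (MonoidAlgebra (ZMod p) G)ˣ) : MonoidAlgebra (ZMod p) G)
            = ((u⁻¹ : (MonoidAlgebra (ZMod p) G)ˣ) : MonoidAlgebra (ZMod p) G)
              * (x * uval) * ((u⁻¹ : (MonoidAlgebra (ZMod p) G)ˣ) : MonoidAlgebra (ZMod p) G) := by
          rw [hcomm]
        calc ((u⁻¹ : (MonoidAlgebra (ZMod p) G)ˣ) : MonoidAlgebra (ZMod p) G) * x
            = ((u⁻¹ : (MonoidAlgebra (ZMod p) G)ˣ) : MonoidAlgebra (ZMod p) G) * x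
                * (uval * ((u⁻¹ : (MonoidAlgebra (ZMod p) G)ˣ) : MonoidAlgebra (ZMod p) G)) := by
              rw [huval, Units.mul_inv, mul_one]
          _ = ((u⁻¹ : (MonoidAlgebra (ZMod p) G)ˣ) : MonoidAlgebra (ZMod p) G)
                * (x * uval) * ((u⁻¹ : (MonoidAlgebra (ZMod p) G)ˣ) : MonoidAlgebra (ZMod p) G) := by
              simp only [mul_assoc]
          _ = ((u⁻¹ : (MonoidAlgebra (ZMod p) G)ˣ) : MonoidAlgebra (ZMod p) G)
                * (uval * x) * ((u⁻¹ : (MonoidAlgebra (ZMod p) G)ˣ) : MonoidAlgebra (ZMod p) G) := by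
              rw [h5]
          _ = (((u⁻¹ : (MonoidAlgebra (ZMod p) G)ˣ) : MonoidAlgebra (ZMod p) G) * uval)
                * (x * ((u⁻¹ : (MonoidAlgebra (ZMod p) G)ˣ) : MonoidAlgebra (ZMod p) G)) := by
              simp only [mul_assoc]
          _ = x * ((u⁻¹ : (MonoidAlgebra (ZMod p) G)ˣ) : MonoidAlgebra (ZMod p) G) := by
              rw [huval, Units.inv_mul, one_mul]
      refine ⟨⟨x, x ^ (p ^ 2 - 1) * ((u⁻¹ : (MonoidAlgebra (ZMod p) G)ˣ)
          : MonoidAlgebra (ZMod p) G), ?_, ?_⟩, ?_, ?_⟩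
      · rw [← mul_assoc, hux, huval, Units.mul_inv]
      · rw [mul_assoc, hinv_comm, ← mul_assoc, hxu, huval, Units.mul_inv]
      · rw [hV_iff]
        exact haug_x
      · apply Units.ext
        rw [Units.val_pow_eq_pow_val]
        exact hx2.symm
end
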